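/- arXiv:2605.23681 — 8 statements merged into one kernel-verified Lean document; each statement's English description precedes it below -/
import Mathlib

section
/- Let C and C' be F_q-subspaces of M_n(F_{q^s}) of F_q-dimension k such that C' = { X A^ρ Y : A ∈ C } for some invertible X, Y ∈ M_n(F_{q^s}) and some field automorphism ρ of F_{q^s}. Then for any F_q-basis (A_1, …, A_k) of C and any F_q-basis (B_1, …, B_k) of C', there exists an invertible matrix Q ∈ M_k(F_q) such that D(B_1, …, B_k) = { ρ(v)·Q : v ∈ D(A_1, …, A_k) }; that is, the associated vector rank-metric codes are equivalent. -/
open Polynomial in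
lemma exists_algebraMap_eq_of_ringEquiv {q : ℕ} (hq : IsPrimePow q)
    (K L : Type*) [Field K] [Fintype K] [Field L] [Algebra K L]
    (hKcard : Fintype.card K = q) (ρ : L ≃+* L) (a : K) :
    ∃ b : K, algebraMap K L b = ρ (algebraMap K L a) := by
  classical
  have hq2 : 2 ≤ q := hq.two_le
  set f := algebraMap K L with hf
  have hinj : Function.Injective f := (algebraMap K L).injective
  set F : Finset L := Finset.univ.image f with hF
  have hFcard : F.card = q := by
    rw [hF, Finset.card_image_of_injective _ hinj, Finset.card_univ, hKcard]
  set p : L[X] := X ^ q - X with hp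
  have hp0 : p ≠ 0 := by
    intro h
    have := congrArg (fun r => Polynomial.coeff r q) h
    simp only [hp, Polynomial.coeff_sub, Polynomial.coeff_X_pow, Polynomial.coeff_X,
      if_pos rfl, if_neg (by omega : ¬ (1 = q)), Polynomial.coeff_zero, sub_zero] at this
    exact one_ne_zero this
  have hpdeg : p.natDegree ≤ q := by
    refine le_trans (Polynomial.natDegree_sub_le _ _) ?_
    simp [Polynomial.natDegree_X_pow]
    omega
  have hroot : ∀ x : L, x ^ q = x → x ∈ p.roots.toFinset := by
    intro x hx
    rw [Multiset.mem_toFinset, Polynomial.mem_roots hp0]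
    simp [Polynomial.IsRoot, hp, hx]
  have hfix : ∀ b : K, (f b) ^ q = f b := by
    intro b
    rw [← map_pow, ← hKcard, FiniteField.pow_card]
  have hsub : F ⊆ p.roots.toFinset := by
    intro x hx
    rw [hF, Finset.mem_image] at hx
    obtain ⟨b, _, rfl⟩ := hx
    exact hroot _ (hfix b)
  have hcardle : p.roots.toFinset.card ≤ q :=
    le_trans (Multiset.toFinset_card_le _) (le_trans (Polynomial.card_roots' p) hpdeg)
  have hFeq : F = p.roots.toFinset :=
    Finset.eq_of_subset_of_card_le hsub (by rw [hFcard]; exact hcardle)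
  have hmem : ρ (f a) ∈ p.roots.toFinset := by
    refine hroot _ ?_
    rw [← map_pow, hfix a]
  rw [← hFeq, hF, Finset.mem_image] at hmem
  obtain ⟨b, _, hb⟩ := hmem
  exact ⟨b, hb⟩



/-- The vector rank-metric code attached to a tuple `(A 1, …, A k)` of `n × n`
matrices over `L`: the set of vectors `(f (A 1), …, f (A k))` as `f` ranges over
all `L`-linear functionals on `Mₙ(L)`. -/
def vcode {L : Type*} [Field L] {n k : ℕ} (A : Fin k → Matrix (Fin n) (Fin n) L) :
    Set (Fin k → L) :=
  { v | ∃ f : Matrix (Fin n) (Fin n) L →ₗ[L] L, v = fun i => f (A i) }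

/-- Let `C, C'` be `F_q`-subspaces of `Mₙ(F_{q^s})` of `F_q`-dimension
`k` with `C' = { X A^ρ Y : A ∈ C }` for some invertible `X, Y` and field automorphism
`ρ`.  Then for any `F_q`-bases `(A₁, …, A_k)` of `C` and `(B₁, …, B_k)` of `C'`, there
is an invertible `Q ∈ M_k(F_q)` with
`D(B₁, …, B_k) = { ρ(v)·Q : v ∈ D(A₁, …, A_k) }`; i.e. the associated vector
rank-metric codes are equivalent. -/
theorem vcode_equiv_of_spreadSet_equiv (q s n k : ℕ) (hq : IsPrimePow q) (hs : 1 ≤ s)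
    (hn : 1 ≤ n) (hk : 1 ≤ k) (K L : Type*) [Field K] [Fintype K] [Field L] [Fintype L]
    [Algebra K L] (hKcard : Fintype.card K = q) (hLcard : Fintype.card L = q ^ s)
    (C C' : Submodule K (Matrix (Fin n) (Fin n) L))
    (X Y : Matrix (Fin n) (Fin n) L) (hX : IsUnit X) (hY : IsUnit Y) (ρ : L ≃+* L)
    (hC' : (C' : Set (Matrix (Fin n) (Fin n) L)) =
      (fun M => X * M.map ρ * Y) '' (C : Set (Matrix (Fin n) (Fin n) L)))
    (A B : Fin k → Matrix (Fin n) (Fin n) L)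
    (hA : LinearIndependent K A) (hAspan : Submodule.span K (Set.range A) = C)
    (hB : LinearIndependent K B) (hBspan : Submodule.span K (Set.range B) = C') :
    ∃ Q : Matrix (Fin k) (Fin k) K, IsUnit Q ∧
      vcode B =
        (fun v => Matrix.vecMul (fun i => ρ (v i)) (Q.map (algebraMap K L))) '' vcode A := by
  classical
  have hρr : ∀ (τ : L ≃+* L) (c : K), ∃ d : K, algebraMap K L d = τ (algebraMap K L c) :=
    fun τ c => exists_algebraMap_eq_of_ringEquiv hq K L hKcard τ c
  set φ : Matrix (Fin n) (Fin n) L → Matrix (Fin n) (Fin n) L :=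
    fun M => X * M.map ρ * Y with hφdef
  have hXinv : X⁻¹ * X = 1 := Matrix.nonsing_inv_mul X ((Matrix.isUnit_iff_isUnit_det X).mp hX)
  have hYinv : Y * Y⁻¹ = 1 := Matrix.mul_nonsing_inv Y ((Matrix.isUnit_iff_isUnit_det Y).mp hY)
  have hcancel : ∀ N : Matrix (Fin n) (Fin n) L, X⁻¹ * (X * N * Y) * Y⁻¹ = N := by
    intro N
    rw [Matrix.mul_assoc X N Y, ← Matrix.mul_assoc X⁻¹ X (N * Y), hXinv, Matrix.one_mul,
      Matrix.mul_assoc N Y Y⁻¹, hYinv, Matrix.mul_one]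
  have hAC : ∀ i, A i ∈ C := fun i => hAspan ▸ Submodule.subset_span (Set.mem_range_self i)
  have hBC' : ∀ j, B j ∈ C' := fun j => hBspan ▸ Submodule.subset_span (Set.mem_range_self j)
  -- semilinearity of map ρ
  have hmapsmul : ∀ (c : L) (M : Matrix (Fin n) (Fin n) L), (c • M).map ρ = ρ c • M.map ρ := by
    intro c M; ext a b; simp [Matrix.map_apply, Matrix.smul_apply, smul_eq_mul, map_mul]
  have hφsmul : ∀ (c : L) (M : Matrix (Fin n) (Fin n) L), φ (c • M) = ρ c • φ M := by
    intro c M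
    simp only [hφdef, hmapsmul, Matrix.mul_smul, Matrix.smul_mul]
  have hφsum : ∀ (M : Fin k → Matrix (Fin n) (Fin n) L), φ (∑ i, M i) = ∑ i, φ (M i) := by
    intro M
    have h1 : (∑ i, M i).map ρ = ∑ i, (M i).map ρ := by
      ext a b; simp [Matrix.map_apply, Matrix.sum_apply, map_sum]
    simp only [hφdef, h1, Finset.mul_sum, Finset.sum_mul]
  have hφlin : ∀ (c : Fin k → K),
      φ (∑ i, c i • A i) = ∑ i, ρ (algebraMap K L (c i)) • φ (A i) := by
    intro c
    rw [show (∑ i, c i • A i) = ∑ i, (algebraMap K L (c i)) • A i from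
      Finset.sum_congr rfl fun i _ => (algebraMap_smul L (c i) (A i)).symm, hφsum]
    exact Finset.sum_congr rfl fun i _ => hφsmul _ _
  have hφinj : ∀ M : Matrix (Fin n) (Fin n) L, φ M = 0 → M = 0 := by
    intro M h
    have h2 : X⁻¹ * (X * M.map ρ * Y) * Y⁻¹ = X⁻¹ * 0 * Y⁻¹ := by rw [← h]
    rw [hcancel, Matrix.mul_zero, Matrix.zero_mul] at h2
    ext a b
    have h3 := congrFun (congrFun h2 a) b
    simpa [Matrix.map_apply] using h3
  have hA'C' : ∀ i, φ (A i) ∈ C' := by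
    intro i
    have : φ (A i) ∈ (C' : Set (Matrix (Fin n) (Fin n) L)) := by
      rw [hC']; exact ⟨A i, hAC i, rfl⟩
    exact this
  have hA'li : LinearIndependent K (fun i => φ (A i)) := by
    rw [Fintype.linearIndependent_iff]
    intro c hc
    choose d hd using fun i => hρr ρ.symm (c i)
    have hsum : ∑ i, c i • φ (A i) = φ (∑ i, d i • A i) := by
      rw [hφlin d]
      refine Finset.sum_congr rfl fun i _ => ?_
      rw [hd i, RingEquiv.apply_symm_apply, algebraMap_smul]
    rw [hsum] at hc
    have hN : ∑ i, d i • A i = 0 := hφinj _ hc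
    have hdz := Fintype.linearIndependent_iff.mp hA d hN
    intro i
    have h1 : algebraMap K L (c i) = 0 := by
      have h2 := hd i
      rw [hdz i, map_zero] at h2
      have := congrArg ρ h2
      rw [map_zero, RingEquiv.apply_symm_apply] at this
      exact this.symm
    exact (algebraMap K L).injective (by rw [h1, map_zero])
  have hA'span : Submodule.span K (Set.range fun i => φ (A i)) = C' := by
    apply le_antisymm
    · rw [Submodule.span_le]
      rintro _ ⟨i, rfl⟩
      exact hA'C' i
    · intro x hx
      have hx' : x ∈ (C' : Set (Matrix (Fin n) (Fin n) L)) := hx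
      rw [hC'] at hx'
      obtain ⟨M, hM, rfl⟩ := hx'
      have hM' : M ∈ Submodule.span K (Set.range A) := by rw [hAspan]; exact hM
      rw [Submodule.mem_span_range_iff_exists_fun] at hM'
      obtain ⟨c, hc⟩ := hM'
      choose d hd using fun i => hρr ρ (c i)
      rw [← hc, hφlin c]
      have heq : ∑ i, ρ (algebraMap K L (c i)) • φ (A i) = ∑ i, d i • φ (A i) :=
        Finset.sum_congr rfl fun i _ => by rw [← hd i, algebraMap_smul]
      rw [heq]
      exact Submodule.sum_mem _ fun i _ =>
        Submodule.smul_mem _ _ (Submodule.subset_span ⟨i, rfl⟩)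
  -- bases of C'
  let bA' : Module.Basis (Fin k) K C' := (Module.Basis.span hA'li).map (LinearEquiv.ofEq _ _ hA'span)
  let bB : Module.Basis (Fin k) K C' := (Module.Basis.span hB).map (LinearEquiv.ofEq _ _ hBspan)
  have hbA' : ∀ i, (bA' i : Matrix (Fin n) (Fin n) L) = φ (A i) := by
    intro i
    rw [show bA' i = (LinearEquiv.ofEq _ _ hA'span) (Module.Basis.span hA'li i) from Module.Basis.map_apply _ _ _]
    rw [LinearEquiv.coe_ofEq_apply]
    exact Module.Basis.coe_span_apply hA'li i
  have hbB : ∀ j, (bB j : Matrix (Fin n) (Fin n) L) = B j := by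
    intro j
    rw [show bB j = (LinearEquiv.ofEq _ _ hBspan) (Module.Basis.span hB j) from Module.Basis.map_apply _ _ _]
    rw [LinearEquiv.coe_ofEq_apply]
    exact Module.Basis.coe_span_apply hB j
  set Q : Matrix (Fin k) (Fin k) K := bA'.toMatrix bB with hQ
  have hQunit : IsUnit Q := by
    have := bA'.invertibleToMatrix bB
    exact isUnit_of_invertible Q
  have hexp : ∀ j, B j = ∑ i, Q i j • φ (A i) := by
    intro j
    have h1 : ∑ i, Q i j • bA' i = bB j := bA'.sum_toMatrix_smul_self bB j
    have h2 := congrArg (Subtype.val) h1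
    rw [← hbB j, ← h2, Submodule.coe_sum]
    exact Finset.sum_congr rfl fun i _ => by rw [SetLike.val_smul, hbA' i]
  have hkey : ∀ (f : Matrix (Fin n) (Fin n) L →ₗ[L] L) (j : Fin k),
      f (B j) = ∑ i, algebraMap K L (Q i j) * f (φ (A i)) := by
    intro f j
    rw [hexp j, map_sum]
    exact Finset.sum_congr rfl fun i _ => by
      rw [LinearMap.map_smul_of_tower, Algebra.smul_def]
  have hmapadd : ∀ (τ : L ≃+* L) (M N : Matrix (Fin n) (Fin n) L),
      (M + N).map τ = M.map τ + N.map τ := by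
    intro τ M N; ext a b; simp [Matrix.map_apply]
  have hmapsmul' : ∀ (c : L) (M : Matrix (Fin n) (Fin n) L),
      (c • M).map ρ.symm = ρ.symm c • M.map ρ.symm := by
    intro c M; ext a b; simp [Matrix.map_apply, Matrix.smul_apply, smul_eq_mul, map_mul]
  have hlin1 : ∀ (f : Matrix (Fin n) (Fin n) L →ₗ[L] L),
      ∃ g : Matrix (Fin n) (Fin n) L →ₗ[L] L, ∀ M, g M = ρ.symm (f (φ M)) := by
    intro f
    refine ⟨{ toFun := fun M => ρ.symm (f (φ M))
              map_add' := ?_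
              map_smul' := ?_ }, fun M => rfl⟩
    · intro M N
      show ρ.symm (f (φ (M + N))) = ρ.symm (f (φ M)) + ρ.symm (f (φ N))
      have hφadd : φ (M + N) = φ M + φ N := by
        simp only [hφdef]
        rw [hmapadd ρ M N, Matrix.mul_add, Matrix.add_mul]
      rw [hφadd, map_add, map_add]
    · intro c M
      show ρ.symm (f (φ (c • M))) = (RingHom.id L) c • ρ.symm (f (φ M))
      simp only [hφsmul, map_smul, smul_eq_mul, map_mul, RingEquiv.symm_apply_apply,
        RingHom.id_apply]
  have hlin2 : ∀ (g : Matrix (Fin n) (Fin n) L →ₗ[L] L),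
      ∃ f : Matrix (Fin n) (Fin n) L →ₗ[L] L,
        ∀ M, f M = ρ (g ((X⁻¹ * M * Y⁻¹).map ρ.symm)) := by
    intro g
    refine ⟨{ toFun := fun M => ρ (g ((X⁻¹ * M * Y⁻¹).map ρ.symm))
              map_add' := ?_
              map_smul' := ?_ }, fun M => rfl⟩
    · intro M N
      show ρ (g ((X⁻¹ * (M + N) * Y⁻¹).map ρ.symm)) =
        ρ (g ((X⁻¹ * M * Y⁻¹).map ρ.symm)) + ρ (g ((X⁻¹ * N * Y⁻¹).map ρ.symm))
      rw [Matrix.mul_add, Matrix.add_mul, hmapadd ρ.symm, map_add, map_add]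
    · intro c M
      show ρ (g ((X⁻¹ * (c • M) * Y⁻¹).map ρ.symm)) =
        (RingHom.id L) c • ρ (g ((X⁻¹ * M * Y⁻¹).map ρ.symm))
      rw [Matrix.mul_smul, Matrix.smul_mul, hmapsmul', map_smul]
      simp only [smul_eq_mul, map_mul, RingEquiv.apply_symm_apply, RingHom.id_apply]
  have hφback : ∀ i, ((X⁻¹ * φ (A i) * Y⁻¹).map ρ.symm) = A i := by
    intro i
    rw [show X⁻¹ * φ (A i) * Y⁻¹ = (A i).map ρ from hcancel _]
    ext a b; simp [Matrix.map_apply]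
  refine ⟨Q, hQunit, ?_⟩
  ext v
  simp only [vcode, Set.mem_setOf_eq, Set.mem_image]
  constructor
  · rintro ⟨f, rfl⟩
    obtain ⟨g, hg⟩ := hlin1 f
    refine ⟨fun i => g (A i), ⟨g, rfl⟩, ?_⟩
    funext j
    simp only [Matrix.vecMul, dotProduct, Matrix.map_apply]
    rw [hkey f j]
    refine Finset.sum_congr rfl fun i _ => ?_
    rw [hg (A i), RingEquiv.apply_symm_apply, mul_comm]
  · rintro ⟨v, ⟨g, rfl⟩, rfl⟩
    obtain ⟨f, hf⟩ := hlin2 g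
    refine ⟨f, ?_⟩
    funext j
    rw [hkey f j]
    simp only [Matrix.vecMul, dotProduct, Matrix.map_apply]
    refine Finset.sum_congr rfl fun i _ => ?_
    rw [hf (φ (A i)), hφback i, mul_comm]
end

section
/- Let C and C' be F_q-subspaces of M_n(F_{q^s}) of F_q-dimension k with F_q-bases (A_1, …, A_k) and (B_1, …, B_k) respectively. If for every invertible Q ∈ M_k(F_q) and every field automorphism ρ of F_{q^s} one has D(B_1, …, B_k) ≠ { ρ(v)·Q : v ∈ D(A_1, …, A_k) }, then there exist no invertible X, Y ∈ M_n(F_{q^s}) and field automorphism ρ' of F_{q^s} with C' = { X A^{ρ'} Y : A ∈ C }; that is, C and C' are inequivalent as matrix rank-metric codes. -/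
open Polynomial Matrix in
/-- The image of a finite subfield under any automorphism of the ambient finite field lands
back in the subfield (it is the set of roots of `X^q - X`). -/
lemma exists_algebraMap_eq_ringEquiv_algebraMap {K L : Type*} [Field K] [Fintype K] [Field L]
    [Fintype L] [Algebra K L] (ρ : L ≃+* L) (a : K) :
    ∃ b : K, algebraMap K L b = ρ (algebraMap K L a) := by
  classical
  set q := Fintype.card K with hqdef
  have hq1 : 1 < q := Fintype.one_lt_card
  set p : Polynomial L := X ^ q - X with hp
  have hpne : p ≠ 0 := by
    intro h
    have := congrArg (fun r => Polynomial.coeff r q) h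
    simp only [hp, Polynomial.coeff_sub, Polynomial.coeff_X_pow, if_pos rfl,
      Polynomial.coeff_X, Polynomial.coeff_zero] at this
    rw [if_neg (by omega : ¬ (1 = q))] at this
    simp at this
  have hdeg : p.natDegree ≤ q := by
    refine le_trans (natDegree_sub_le _ _) ?_
    simp [natDegree_X_pow, natDegree_X]
    omega
  set T : Finset L := Finset.image (algebraMap K L) Finset.univ with hT
  set S : Finset L := p.roots.toFinset with hS
  have hroot : ∀ x : L, x ^ q = x → x ∈ S := by
    intro x hx
    simp only [hS, Multiset.mem_toFinset, mem_roots hpne, IsRoot, hp]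
    simp [hx]
    exact hpne
  have hTS : T ⊆ S := by
    intro y hy
    simp only [hT, Finset.mem_image, Finset.mem_univ, true_and] at hy
    obtain ⟨a, rfl⟩ := hy
    exact hroot _ (by rw [← map_pow, FiniteField.pow_card])
  have hcards : S.card ≤ T.card := by
    have h1 : S.card ≤ Multiset.card p.roots := p.roots.toFinset_card_le
    have h2 : Multiset.card p.roots ≤ p.natDegree := Polynomial.card_roots' p
    have h3 : T.card = q := by
      rw [hT, Finset.card_image_of_injective _ (algebraMap K L).injective, Finset.card_univ]
    omega
  have hST : T = S := Finset.eq_of_subset_of_card_le hTS hcards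
  have hx : ρ (algebraMap K L a) ∈ S := by
    refine hroot _ ?_
    rw [← map_pow, ← map_pow, FiniteField.pow_card]
  rw [← hST] at hx
  simp only [hT, Finset.mem_image, Finset.mem_univ, true_and] at hx
  obtain ⟨b, hb⟩ := hx
  exact ⟨b, hb⟩

/-- Let `C, C'` be `F_q`-subspaces of `Mₙ(F_{q^s})` of `F_q`-dimension
`k` with `F_q`-bases `(A₁, …, A_k)` and `(B₁, …, B_k)`.  If for every invertible
`Q ∈ M_k(F_q)` and every field automorphism `ρ` we have
`D(B₁, …, B_k) ≠ { ρ(v)·Q : v ∈ D(A₁, …, A_k) }`, then there are no invertible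
`X, Y ∈ Mₙ(F_{q^s})` and automorphism `ρ'` with `C' = { X A^{ρ'} Y : A ∈ C }`;
that is, `C` and `C'` are inequivalent as matrix rank-metric codes. -/
theorem inequiv_of_vcode_inequiv (q s n k : ℕ) (hq : IsPrimePow q) (hs : 1 ≤ s)
    (hn : 1 ≤ n) (hk : 1 ≤ k) (K L : Type*) [Field K] [Fintype K] [Field L] [Fintype L]
    [Algebra K L] (hKcard : Fintype.card K = q) (hLcard : Fintype.card L = q ^ s)
    (C C' : Submodule K (Matrix (Fin n) (Fin n) L))
    (A B : Fin k → Matrix (Fin n) (Fin n) L)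
    (hA : LinearIndependent K A) (hAspan : Submodule.span K (Set.range A) = C)
    (hB : LinearIndependent K B) (hBspan : Submodule.span K (Set.range B) = C')
    (hne : ∀ (Q : Matrix (Fin k) (Fin k) K) (ρ : L ≃+* L), IsUnit Q →
      vcode B ≠
        (fun v => Matrix.vecMul (fun i => ρ (v i)) (Q.map (algebraMap K L))) '' vcode A) :
    ¬ ∃ (X Y : Matrix (Fin n) (Fin n) L) (ρ' : L ≃+* L), IsUnit X ∧ IsUnit Y ∧
        (C' : Set (Matrix (Fin n) (Fin n) L)) =
          (fun M => X * M.map ρ' * Y) '' (C : Set (Matrix (Fin n) (Fin n) L)) := by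
  classical
  rintro ⟨X, Y, ρ', hX, hY, hCC⟩
  -- the semilinear map `ψ`
  set ψ : Matrix (Fin n) (Fin n) L → Matrix (Fin n) (Fin n) L :=
    fun M => X * M.map ρ' * Y with hψdef
  have hmap_smul : ∀ (c : L) (M : Matrix (Fin n) (Fin n) L),
      (c • M).map ρ' = ρ' c • M.map ρ' := by
    intro c M
    ext i j
    simp [Matrix.map_apply, Matrix.smul_apply, map_mul, smul_eq_mul]
  have hψsmul : ∀ (c : L) (M : Matrix (Fin n) (Fin n) L), ψ (c • M) = ρ' c • ψ M := by
    intro c M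
    simp only [hψdef, hmap_smul, Matrix.mul_smul, Matrix.smul_mul]
  have hmap_add : ∀ (M N : Matrix (Fin n) (Fin n) L),
      (M + N).map ρ' = M.map ρ' + N.map ρ' := by
    intro M N; ext i j; simp [Matrix.map_apply]
  have hψadd : ∀ M N, ψ (M + N) = ψ M + ψ N := by
    intro M N
    simp only [hψdef, hmap_add, Matrix.add_mul, Matrix.mul_add]
  let ψh : Matrix (Fin n) (Fin n) L →+ Matrix (Fin n) (Fin n) L :=
    { toFun := ψ
      map_zero' := by
        have : ((0 : Matrix (Fin n) (Fin n) L)).map ρ' = 0 := by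
          ext i j; simp [Matrix.map_apply]
        simp [hψdef, this]
      map_add' := hψadd }
  -- each `B i` is the image of an element of `C`
  have h1 : ∀ i, ∃ M, M ∈ (C : Set (Matrix (Fin n) (Fin n) L)) ∧ ψ M = B i := by
    intro i
    have hBi : B i ∈ (C' : Set (Matrix (Fin n) (Fin n) L)) := by
      rw [← hBspan]; exact Submodule.subset_span ⟨i, rfl⟩
    rw [hCC] at hBi
    obtain ⟨M, hM, hMe⟩ := hBi
    exact ⟨M, hM, hMe⟩
  choose M hMC hMB using h1
  have h2 : ∀ i, ∃ c : Fin k → K, ∑ j, c j • A j = M i := by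
    intro i
    have : M i ∈ Submodule.span K (Set.range A) := by rw [hAspan]; exact hMC i
    exact Submodule.mem_span_range_iff_exists_fun K |>.mp this
  choose c hc using h2
  -- the change-of-basis matrix over K
  have hτ : ∀ a : K, ∃ b : K, algebraMap K L b = ρ' (algebraMap K L a) :=
    exists_algebraMap_eq_ringEquiv_algebraMap ρ'
  set Q : Matrix (Fin k) (Fin k) K := Matrix.of fun j i => (hτ (c i j)).choose with hQdef
  have hQspec : ∀ i j, algebraMap K L (Q j i) = ρ' (algebraMap K L (c i j)) :=
    fun i j => (hτ (c i j)).choose_spec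
  have hBQ : ∀ i, B i = ∑ j, algebraMap K L (Q j i) • ψ (A j) := by
    intro i
    rw [← hMB i, ← hc i]
    have : ψ (∑ j, c i j • A j) = ∑ j, ψ (c i j • A j) := map_sum ψh _ _
    rw [this]
    refine Finset.sum_congr rfl fun j _ => ?_
    rw [← algebraMap_smul L (c i j) (A j), hψsmul, hQspec]
  -- Q is invertible
  have hQunit : IsUnit Q := by
    rw [← Matrix.mulVec_injective_iff_isUnit, Matrix.mulVec_injective_iff,
      Fintype.linearIndependent_iff]
    intro x hx0
    have hx : Q.mulVec x = 0 := by
      funext j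
      have := congrFun hx0 j
      simpa [Matrix.mulVec, dotProduct, Matrix.transpose_apply, mul_comm] using this
    have hsum : ∑ i, x i • B i = 0 := by
      have : ∀ i, x i • B i = ∑ j, algebraMap K L (Q j i * x i) • ψ (A j) := by
        intro i
        rw [hBQ i, Finset.smul_sum]
        refine Finset.sum_congr rfl fun j _ => ?_
        rw [← algebraMap_smul L (x i), smul_smul, ← map_mul, mul_comm]
      simp only [this]
      rw [Finset.sum_comm]
      refine Finset.sum_eq_zero fun j _ => ?_
      rw [← Finset.sum_smul]
      have : ∑ i, algebraMap K L (Q j i * x i) = algebraMap K L (Q.mulVec x j) := by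
        rw [Matrix.mulVec, dotProduct, map_sum]
      rw [this, hx]; simp
    exact Fintype.linearIndependent_iff.mp hB x hsum
  -- contradiction with hne
  refine hne Q ρ' hQunit ?_
  -- key computation
  have key : ∀ (f : Matrix (Fin n) (Fin n) L →ₗ[L] L) i,
      f (B i) = ∑ j, f (ψ (A j)) * algebraMap K L (Q j i) := by
    intro f i
    rw [hBQ i, map_sum]
    refine Finset.sum_congr rfl fun j _ => ?_
    rw [map_smul, smul_eq_mul, mul_comm]
  have hXd : IsUnit X.det := (Matrix.isUnit_iff_isUnit_det X).mp hX
  have hYd : IsUnit Y.det := (Matrix.isUnit_iff_isUnit_det Y).mp hY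
  ext v
  constructor
  · rintro ⟨f, rfl⟩
    refine ⟨fun j => ρ'.symm (f (ψ (A j))), ⟨?_, ?_⟩⟩
    · refine ⟨{ toFun := fun N => ρ'.symm (f (ψ N)),
                map_add' := by intro M N; rw [hψadd, map_add, map_add],
                map_smul' := ?_ }, rfl⟩
      intro cL N
      simp only [hψsmul, map_smul, smul_eq_mul, map_mul, RingHom.id_apply,
        RingEquiv.symm_apply_apply]
    · funext i
      simp only [Matrix.vecMul, dotProduct, Matrix.map_apply,
        RingEquiv.apply_symm_apply]
      exact (key f i).symm
  · rintro ⟨w, ⟨g, rfl⟩, rfl⟩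
    refine ⟨{ toFun := fun N => ρ' (g ((X⁻¹ * N * Y⁻¹).map ρ'.symm)),
              map_add' := ?_, map_smul' := ?_ }, ?_⟩
    · intro M N
      have h1 : X⁻¹ * (M + N) * Y⁻¹ = X⁻¹ * M * Y⁻¹ + X⁻¹ * N * Y⁻¹ := by
        rw [Matrix.mul_add, Matrix.add_mul]
      have h2 : (X⁻¹ * M * Y⁻¹ + X⁻¹ * N * Y⁻¹).map ρ'.symm =
          (X⁻¹ * M * Y⁻¹).map ρ'.symm + (X⁻¹ * N * Y⁻¹).map ρ'.symm := by
        ext i j; simp only [Matrix.map_apply, Matrix.add_apply, map_add]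
      rw [h1, h2, map_add, map_add]
    · intro cL N
      have h1 : X⁻¹ * (cL • N) * Y⁻¹ = cL • (X⁻¹ * N * Y⁻¹) := by
        rw [Matrix.mul_smul, Matrix.smul_mul]
      have h2 : (cL • (X⁻¹ * N * Y⁻¹)).map ρ'.symm =
          ρ'.symm cL • (X⁻¹ * N * Y⁻¹).map ρ'.symm := by
        ext i j; simp only [Matrix.map_apply, Matrix.smul_apply, smul_eq_mul, map_mul]
      simp only [h1, h2, map_smul, smul_eq_mul, map_mul, RingHom.id_apply,
        RingEquiv.apply_symm_apply]
    · have hψA : ∀ j, (X⁻¹ * (ψ (A j)) * Y⁻¹).map ρ'.symm = A j := by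
        intro j
        have h1 : X⁻¹ * (X * (A j).map ρ' * Y) * Y⁻¹ = (A j).map ρ' := by
          rw [show X * (A j).map ρ' * Y = X * ((A j).map ρ' * Y) by rw [Matrix.mul_assoc],
            ← Matrix.mul_assoc X⁻¹ X, Matrix.nonsing_inv_mul X hXd, Matrix.one_mul,
            Matrix.mul_assoc, Matrix.mul_nonsing_inv Y hYd, Matrix.mul_one]
        rw [hψdef]
        simp only [h1]
        ext i j'
        simp [Matrix.map_apply]
      funext i
      dsimp only
      rw [key]
      simp only [Matrix.vecMul, dotProduct, Matrix.map_apply, LinearMap.coe_mk,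
        AddHom.coe_mk, hψA]
end

section
/- Let C and C' be F_q-subspaces of M_n(F_{q^s}) with C' = { X A^ρ Y : A ∈ C } for some invertible X, Y ∈ M_n(F_{q^s}) and field automorphism ρ of F_{q^s}. Then for every m ≥ 1 there exist invertible matrices X', Y' ∈ M_{ns}(F_{q^m}) and a field automorphism ρ' of F_{q^m} such that E_m(C') = { X' M^{ρ'} Y' : M ∈ E_m(C) }. In particular, for every m ≥ 1 the multiset of ranks { rank(M) : M ∈ E_m(C) } equals the multiset of ranks { rank(M) : M ∈ E_m(C') }. -/
/-- The regular representation `φ : F_{q^s} → M_s(F_q)` with respect to an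
`F_q`-basis `b = (v₁, …, v_s)` of `F_{q^s}`: `φ(α)` is the matrix of the
`F_q`-linear map `x ↦ αx` in the basis `b`, i.e. `α·v_j = Σ_i φ(α)_{ij} v_i`. -/
noncomputable def phi {K L : Type*} [Field K] [Field L] [Algebra K L] {s : ℕ}
    (b : Module.Basis (Fin s) K L) (α : L) : Matrix (Fin s) (Fin s) K :=
  LinearMap.toMatrix b b (LinearMap.mulLeft K α)

/-- `φ̄ : Mₙ(F_{q^s}) → M_{ns}(F_q)` sends `A = (a_{ij})` to the `n × n` block
matrix whose `(i,j)` block is `φ(a_{ij})`. -/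
noncomputable def phibar {K L : Type*} [Field K] [Field L] [Algebra K L] {s n : ℕ}
    (b : Module.Basis (Fin s) K L) (A : Matrix (Fin n) (Fin n) L) :
    Matrix (Fin n × Fin s) (Fin n × Fin s) K :=
  fun p r => phi b (A p.1 r.1) p.2 r.2

/-- The `m`-th embedded space `E_m(C)`: the `F_{q^m}`-span of `{ φ̄(A) : A ∈ C }`
inside `M_{ns}(F_{q^m})`, the entries of `φ̄(A)` viewed in `F_{q^m}` via
`F_q ⊆ F_{q^m}`. -/
noncomputable def embSpace {K L M : Type*} [Field K] [Field L] [Field M] [Algebra K L]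
    [Algebra K M] {s n : ℕ} (b : Module.Basis (Fin s) K L)
    (C : Submodule K (Matrix (Fin n) (Fin n) L)) :
    Submodule M (Matrix (Fin n × Fin s) (Fin n × Fin s) M) :=
  Submodule.span M
    ((fun A => (phibar b A).map (algebraMap K M)) '' (C : Set (Matrix (Fin n) (Fin n) L)))

namespace EmbAux

open Matrix Polynomial

section Semi

variable {K L : Type*} [Field K] [Field L] [Algebra K L] {s n : ℕ}
variable (b : Module.Basis (Fin s) K L) (ρ : L ≃+* L) (σ : K ≃+* K)

/-- `phibar` as a ring hom. -/
noncomputable def phibarHom (b : Module.Basis (Fin s) K L) (n : ℕ) :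
    Matrix (Fin n) (Fin n) L →+* Matrix (Fin n × Fin s) (Fin n × Fin s) K :=
  (Matrix.compRingEquiv (Fin n) (Fin s) K).toRingHom.comp
    (RingHom.mapMatrix (Algebra.leftMulMatrix b).toRingHom)

lemma phi_apply (α : L) (i j : Fin s) :
    phi b α i j = b.repr (α * b j) i := by
  rw [phi, LinearMap.toMatrix_apply, LinearMap.mulLeft_apply]

lemma phibar_eq_phibarHom (A : Matrix (Fin n) (Fin n) L) :
    phibar b A = phibarHom b n A := by
  ext ⟨i, k⟩ ⟨j, l⟩
  show phi b (A i j) k l = _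
  rw [phi_apply]
  simp [phibarHom, Algebra.leftMulMatrix_eq_repr_mul]

/-- matrix of `ρ` on the basis `b` -/
noncomputable def rhoMat : Matrix (Fin s) (Fin s) K :=
  Matrix.of fun i j => b.repr (ρ (b j)) i

/-- matrix of `ρ⁻¹`, twisted by `σ` -/
noncomputable def rhoMatInv : Matrix (Fin s) (Fin s) K :=
  (Matrix.of fun i j => b.repr (ρ.symm (b j)) i).map ⇑σ

variable (hσ : ∀ x : K, ρ (algebraMap K L x) = algebraMap K L (σ x))

include hσ in
lemma rho_smul (c : K) (x : L) : ρ (c • x) = σ c • ρ x := by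
  rw [Algebra.smul_def, _root_.map_mul, hσ, Algebra.smul_def]

include hσ in
lemma semi1 (α : L) :
    Algebra.leftMulMatrix b (ρ α) * rhoMat b ρ
      = rhoMat b ρ * (Algebra.leftMulMatrix b α).map ⇑σ := by
  ext i j
  have h1 : ρ (α * b j) = ∑ t, rhoMat b ρ t j • (ρ α * b t) := by
    rw [_root_.map_mul]
    conv_lhs => rw [← Module.Basis.sum_repr b (ρ (b j))]
    rw [Finset.mul_sum]
    exact Finset.sum_congr rfl fun t _ => mul_smul_comm _ _ _
  have h2 : ρ (α * b j) = ∑ t, σ (Algebra.leftMulMatrix b α t j) • ρ (b t) := by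
    conv_lhs => rw [← Module.Basis.sum_repr b (α * b j), map_sum]
    exact Finset.sum_congr rfl fun t _ => by
      rw [rho_smul ρ σ hσ, Algebra.leftMulMatrix_eq_repr_mul]
  have e2 := congrArg (fun x => (b.repr x) i) (h1.symm.trans h2)
  simp only [map_sum, _root_.map_smul, Finsupp.coe_finset_sum, Finset.sum_apply,
    Finsupp.smul_apply, smul_eq_mul] at e2
  rw [Matrix.mul_apply, Matrix.mul_apply]
  calc ∑ t, Algebra.leftMulMatrix b (ρ α) i t * rhoMat b ρ t j
      = ∑ t, rhoMat b ρ t j * (b.repr (ρ α * b t)) i := by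
        refine Finset.sum_congr rfl fun t _ => ?_
        rw [Algebra.leftMulMatrix_eq_repr_mul, mul_comm]
    _ = ∑ t, σ (Algebra.leftMulMatrix b α t j) * (b.repr (ρ (b t))) i := e2
    _ = ∑ t, rhoMat b ρ i t * ((Algebra.leftMulMatrix b α).map ⇑σ) t j := by
        refine Finset.sum_congr rfl fun t _ => ?_
        rw [Matrix.map_apply, mul_comm]
        rfl

include hσ in
lemma rho_mul_inv : rhoMat b ρ * rhoMatInv b ρ σ = 1 := by
  ext i j
  have h1 : (b j : L) = ∑ t, σ (b.repr (ρ.symm (b j)) t) • ρ (b t) := by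
    conv_lhs => rw [← RingEquiv.apply_symm_apply ρ (b j), ← Module.Basis.sum_repr b (ρ.symm (b j)),
      map_sum]
    exact Finset.sum_congr rfl fun t _ => by rw [rho_smul ρ σ hσ]
  have e1 := congrArg (fun x => (b.repr x) i) h1
  simp only [map_sum, _root_.map_smul, Finsupp.coe_finset_sum, Finset.sum_apply,
    Finsupp.smul_apply, smul_eq_mul, Module.Basis.repr_self, Finsupp.single_apply] at e1
  rw [Matrix.mul_apply, Matrix.one_apply]
  symm
  calc (if i = j then (1:K) else 0)
      = (if j = i then (1:K) else 0) := by rw [if_congr (Iff.intro Eq.symm Eq.symm) rfl rfl]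
    _ = ∑ t, σ ((b.repr (ρ.symm (b j))) t) * (b.repr (ρ (b t))) i := e1
    _ = ∑ t, rhoMat b ρ i t * rhoMatInv b ρ σ t j := by
        refine Finset.sum_congr rfl fun t _ => ?_
        rw [rhoMatInv, Matrix.map_apply, rhoMat, mul_comm]
        rfl

include hσ in
lemma rho_inv_mul : rhoMatInv b ρ σ * rhoMat b ρ = 1 :=
  mul_eq_one_comm.mp (rho_mul_inv b ρ σ hσ)

include hσ in
lemma semi_conj (α : L) :
    Algebra.leftMulMatrix b (ρ α)
      = rhoMat b ρ * (Algebra.leftMulMatrix b α).map ⇑σ * rhoMatInv b ρ σ := by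
  calc Algebra.leftMulMatrix b (ρ α)
      = Algebra.leftMulMatrix b (ρ α) * (rhoMat b ρ * rhoMatInv b ρ σ) := by
        rw [rho_mul_inv b ρ σ hσ, mul_one]
    _ = (Algebra.leftMulMatrix b (ρ α) * rhoMat b ρ) * rhoMatInv b ρ σ := by rw [mul_assoc]
    _ = _ := by rw [semi1 b ρ σ hσ]

/-- block-scalar matrix with diagonal blocks `R` -/
noncomputable def blockScalar (n : ℕ) (R : Matrix (Fin s) (Fin s) K) :
    Matrix (Fin n × Fin s) (Fin n × Fin s) K :=
  Matrix.compRingEquiv (Fin n) (Fin s) K (Matrix.scalar (Fin n) R)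

lemma blockScalar_mul (n : ℕ) (R R' : Matrix (Fin s) (Fin s) K) :
    blockScalar n R * blockScalar n R' = blockScalar n (R * R') := by
  rw [blockScalar, blockScalar, blockScalar, ← _root_.map_mul, ← _root_.map_mul]

lemma blockScalar_one (n : ℕ) : blockScalar n (1 : Matrix (Fin s) (Fin s) K) = 1 := by
  rw [blockScalar, _root_.map_one, _root_.map_one]

lemma compMapEntry (Z : Matrix (Fin n) (Fin n) (Matrix (Fin s) (Fin s) K)) (f : K → K) :
    (Matrix.compRingEquiv (Fin n) (Fin s) K Z).map f
      = Matrix.compRingEquiv (Fin n) (Fin s) K (Z.map (fun B => B.map f)) := by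
  ext ⟨i, k⟩ ⟨j, l⟩
  rfl

include hσ in
lemma phibar_rho (A : Matrix (Fin n) (Fin n) L) :
    phibarHom b n (A.map ⇑ρ)
      = blockScalar n (rhoMat b ρ) * (phibarHom b n A).map ⇑σ
          * blockScalar n (rhoMatInv b ρ σ) := by
  rw [phibarHom, RingHom.comp_apply, RingHom.comp_apply, RingEquiv.toRingHom_eq_coe]
  rw [show ∀ Z : Matrix (Fin n) (Fin n) (Matrix (Fin s) (Fin s) K),
      ((Matrix.compRingEquiv (Fin n) (Fin s) K : _ →+* _) Z)
        = Matrix.compRingEquiv (Fin n) (Fin s) K Z from fun _ => rfl,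
    show ∀ Z : Matrix (Fin n) (Fin n) (Matrix (Fin s) (Fin s) K),
      ((Matrix.compRingEquiv (Fin n) (Fin s) K : _ →+* _) Z)
        = Matrix.compRingEquiv (Fin n) (Fin s) K Z from fun _ => rfl]
  rw [compMapEntry, blockScalar, blockScalar, ← _root_.map_mul, ← _root_.map_mul]
  congr 1
  ext i j : 2
  simp only [RingHom.mapMatrix_apply, Matrix.map_apply, Matrix.scalar_apply,
    Matrix.mul_diagonal, Matrix.diagonal_mul, AlgHom.toRingHom_eq_coe, RingHom.coe_coe]
  rw [semi_conj b ρ σ hσ (A i j)]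

end Semi

lemma rank_map_ringEquiv {ι : Type*} [Fintype ι] {F : Type*} [Field F] (e : F ≃+* F)
    (N : Matrix ι ι F) : (N.map ⇑e).rank = N.rank := by
  classical
  have key : ∀ v : ι → F, (N.map ⇑e).mulVec (⇑e ∘ v) = ⇑e ∘ N.mulVec v := by
    intro v
    funext i
    simp only [Matrix.mulVec, dotProduct, Function.comp_apply, Matrix.map_apply,
      map_sum, _root_.map_mul]
  set S := LinearMap.range N.mulVecLin with hS
  set S' := LinearMap.range (N.map ⇑e).mulVecLin with hS'
  have mem1 : ∀ x : ι → F, x ∈ S → (⇑e ∘ x) ∈ S' := by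
    rintro x ⟨v, rfl⟩
    exact ⟨⇑e ∘ v, by rw [Matrix.mulVecLin_apply, Matrix.mulVecLin_apply, key]⟩
  have mem2 : ∀ y : ι → F, y ∈ S' → (⇑e.symm ∘ y) ∈ S := by
    rintro y ⟨w, rfl⟩
    refine ⟨⇑e.symm ∘ w, ?_⟩
    have h := key (⇑e.symm ∘ w)
    have h2 : ⇑e ∘ (⇑e.symm ∘ w) = w := by
      funext i; exact e.apply_symm_apply _
    rw [h2] at h
    rw [Matrix.mulVecLin_apply, Matrix.mulVecLin_apply, h]
    funext i
    exact (e.symm_apply_apply _).symm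
  let j : S ≃+ S' :=
    { toFun := fun x => ⟨⇑e ∘ (x : ι → F), mem1 _ x.2⟩
      invFun := fun y => ⟨⇑e.symm ∘ (y : ι → F), mem2 _ y.2⟩
      left_inv := fun x => by
        ext i
        exact e.symm_apply_apply _
      right_inv := fun y => by
        ext i
        exact e.apply_symm_apply _
      map_add' := fun x y => by
        ext i
        exact map_add e _ _ }
  have hrank : Module.rank F S = Module.rank F S' := by
    refine rank_eq_of_equiv_equiv (⟨⇑e, map_zero e⟩ : ZeroHom F F) j e.bijective ?_
    intro r x
    ext i
    exact _root_.map_mul e r _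
  show Module.finrank F S' = Module.finrank F S
  rw [Module.finrank, Module.finrank, hrank]

lemma exists_sigma {K L : Type*} [Field K] [Fintype K] [Field L] [Fintype L] [Algebra K L]
    (ρ : L ≃+* L) :
    ∃ σ : K ≃+* K, ∀ x : K, ρ (algebraMap K L x) = algebraMap K L (σ x) := by
  classical
  have hq2 : 1 < Fintype.card K := Fintype.one_lt_card
  set q := Fintype.card K with hq
  have hdeg : (X ^ q - X : L[X]).natDegree = q :=
    FiniteField.X_pow_card_sub_X_natDegree_eq L hq2
  have hP0 : (X ^ q - X : L[X]) ≠ 0 := by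
    intro h
    rw [h, Polynomial.natDegree_zero] at hdeg
    omega
  have hrange : Set.range (algebraMap K L) = {a : L | a ^ q = a} := by
    apply Set.eq_of_subset_of_ncard_le
    · rintro _ ⟨x, rfl⟩
      simp only [Set.mem_setOf_eq, ← map_pow]
      rw [FiniteField.pow_card]
    · have h1 : {a : L | a ^ q = a} ⊆ ↑((X ^ q - X : L[X]).roots.toFinset) := by
        intro a ha
        simp only [Set.mem_setOf_eq] at ha
        simp only [Finset.coe_sort_coe, Multiset.mem_toFinset, Finset.mem_coe,
          Polynomial.mem_roots', Polynomial.IsRoot, Polynomial.eval_sub, Polynomial.eval_pow,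
          Polynomial.eval_X]
        exact ⟨hP0, by rw [ha, sub_self]⟩
      calc {a : L | a ^ q = a}.ncard ≤ ((X ^ q - X : L[X]).roots.toFinset : Finset L).card := by
            rw [← Set.ncard_coe_finset]
            exact Set.ncard_le_ncard h1 (Finset.finite_toSet _)
        _ ≤ Multiset.card (X ^ q - X : L[X]).roots := Multiset.toFinset_card_le _
        _ ≤ q := by
            have := Polynomial.card_roots' (X ^ q - X : L[X])
            omega
        _ = (Set.range (algebraMap K L)).ncard := by
            rw [← Set.image_univ, Set.ncard_image_of_injective _ (algebraMap K L).injective,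
              Set.ncard_univ, Nat.card_eq_fintype_card]
    · exact Set.toFinite _
  have hmem : ∀ x : K, ∃ y, algebraMap K L y = ρ (algebraMap K L x) := by
    intro x
    have h1 : (algebraMap K L x) ∈ {a : L | a ^ q = a} := hrange ▸ Set.mem_range_self x
    have h1' : (algebraMap K L x) ^ q = algebraMap K L x := h1
    have h2 : ρ (algebraMap K L x) ∈ Set.range (algebraMap K L) := by
      rw [hrange]
      show (ρ (algebraMap K L x)) ^ q = ρ (algebraMap K L x)
      rw [← map_pow, h1']
    exact h2
  have hmem' : ∀ x : K, ∃ y, algebraMap K L y = ρ.symm (algebraMap K L x) := by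
    intro x
    have h1 : (algebraMap K L x) ∈ {a : L | a ^ q = a} := hrange ▸ Set.mem_range_self x
    have h1' : (algebraMap K L x) ^ q = algebraMap K L x := h1
    have h2 : ρ.symm (algebraMap K L x) ∈ Set.range (algebraMap K L) := by
      rw [hrange]
      show (ρ.symm (algebraMap K L x)) ^ q = ρ.symm (algebraMap K L x)
      rw [← map_pow, h1']
    exact h2
  choose f hf using hmem
  choose g hg using hmem'
  have hinj := (algebraMap K L).injective
  refine ⟨{ toFun := f, invFun := g,
            left_inv := fun x => hinj ?_, right_inv := fun x => hinj ?_,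
            map_mul' := fun x y => hinj ?_, map_add' := fun x y => hinj ?_ },
          fun x => (hf x).symm⟩
  · rw [hg, hf, RingEquiv.symm_apply_apply]
  · rw [hf, hg, RingEquiv.apply_symm_apply]
  · rw [hf, _root_.map_mul, _root_.map_mul, _root_.map_mul, hf, hf]
  · rw [hf, _root_.map_add, _root_.map_add, _root_.map_add, hf, hf]

lemma exists_rho' {K M : Type*} [Field K] [Fintype K] [Field M] [Fintype M] [Algebra K M]
    (σ : K ≃+* K) : ∃ ρ' : M ≃+* M, ∀ x : K, ρ' (algebraMap K M x) = algebraMap K M (σ x) := by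
  classical
  set p := ringChar K with hp
  haveI : CharP K p := ringChar.charP K
  have hpp : p.Prime := CharP.char_is_prime K p
  haveI : Fact p.Prime := ⟨hpp⟩
  haveI : CharP M p := charP_of_injective_algebraMap (algebraMap K M).injective p
  letI : Algebra (ZMod p) K := ZMod.algebra K p
  letI : Algebra (ZMod p) M := ZMod.algebra M p
  haveI : IsScalarTower (ZMod p) K M :=
    IsScalarTower.of_algebraMap_eq (fun x => by
      have h := RingHom.ext_zmod (algebraMap (ZMod p) M)
        ((algebraMap K M).comp (algebraMap (ZMod p) K))
      exact congrFun (congrArg (↑·) h) x)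
  haveI : Normal (ZMod p) M :=
    Normal.of_isSplittingField (X ^ Fintype.card M - X : (ZMod p)[X])
  have hcomm : ∀ x : ZMod p, σ (algebraMap (ZMod p) K x) = algebraMap (ZMod p) K x := by
    intro x
    have h := RingHom.ext_zmod (σ.toRingHom.comp (algebraMap (ZMod p) K)) (algebraMap (ZMod p) K)
    exact congrFun (congrArg (↑·) h) x
  let σa : K ≃ₐ[ZMod p] K := AlgEquiv.ofRingEquiv (f := σ) hcomm
  refine ⟨(σa.liftNormal M).toRingEquiv, fun x => ?_⟩
  exact σa.liftNormal_commutes M x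

lemma mulmap_inj {ι F : Type*} [Fintype ι] [DecidableEq ι] [Field F]
    {X' Y' : Matrix ι ι F} (hX' : IsUnit X') (hY' : IsUnit Y') (e : F ≃+* F) :
    Function.Injective fun N : Matrix ι ι F => X' * N.map ⇑e * Y' := by
  intro N1 N2 h
  obtain ⟨u, rfl⟩ := hX'
  obtain ⟨v, rfl⟩ := hY'
  simp only at h
  rw [mul_assoc, mul_assoc] at h
  have h3 := (Units.mul_left_inj v).mp ((Units.mul_right_inj u).mp h)
  ext p r
  exact e.injective (congrFun (congrFun h3 p) r)

end EmbAux

open Matrix EmbAux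

/-- If `C' = { X A^ρ Y : A ∈ C }` for invertible `X, Y ∈ Mₙ(F_{q^s})`
and a field automorphism `ρ` of `F_{q^s}`, then for every `m ≥ 1` there exist
invertible `X', Y' ∈ M_{ns}(F_{q^m})` and a field automorphism `ρ'` of `F_{q^m}` with
`E_m(C') = { X' M^{ρ'} Y' : M ∈ E_m(C) }`; in particular `E_m(C)` and `E_m(C')` have
the same rank distribution. -/
theorem embSpace_equiv_of_equiv (q s n m : ℕ) (hq : IsPrimePow q) (hs : 1 ≤ s)
    (hn : 1 ≤ n) (hm : 1 ≤ m) (K L M : Type*) [Field K] [Fintype K] [Field L] [Fintype L]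
    [Field M] [Fintype M] [Algebra K L] [Algebra K M] (hKcard : Fintype.card K = q)
    (hLcard : Fintype.card L = q ^ s) (hMcard : Fintype.card M = q ^ m)
    (b : Module.Basis (Fin s) K L)
    (C C' : Submodule K (Matrix (Fin n) (Fin n) L))
    (X Y : Matrix (Fin n) (Fin n) L) (hX : IsUnit X) (hY : IsUnit Y) (ρ : L ≃+* L)
    (hC' : (C' : Set (Matrix (Fin n) (Fin n) L)) =
      (fun A => X * A.map ρ * Y) '' (C : Set (Matrix (Fin n) (Fin n) L))) :
    (∃ (X' Y' : Matrix (Fin n × Fin s) (Fin n × Fin s) M) (ρ' : M ≃+* M),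
        IsUnit X' ∧ IsUnit Y' ∧
        ((embSpace (M := M) b C' : Set (Matrix (Fin n × Fin s) (Fin n × Fin s) M)) =
          (fun N => X' * N.map ρ' * Y') ''
            (embSpace (M := M) b C : Set (Matrix (Fin n × Fin s) (Fin n × Fin s) M)))) ∧
      ∀ r : ℕ,
        {N ∈ (embSpace (M := M) b C : Set (Matrix (Fin n × Fin s) (Fin n × Fin s) M)) |
            N.rank = r}.ncard =
        {N ∈ (embSpace (M := M) b C' : Set (Matrix (Fin n × Fin s) (Fin n × Fin s) M)) |
            N.rank = r}.ncard := by
  classical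
  obtain ⟨σ, hσ⟩ := exists_sigma (K := K) (L := L) ρ
  obtain ⟨ρ', hρ'⟩ := exists_rho' (K := K) (M := M) σ
  set am : K →+* M := algebraMap K M with ham
  set gmap : Matrix (Fin n) (Fin n) L →+* Matrix (Fin n × Fin s) (Fin n × Fin s) M :=
    (am.mapMatrix).comp (phibarHom b n) with hgmap
  have hg : ∀ A : Matrix (Fin n) (Fin n) L,
      (phibar b A).map (algebraMap K M) = gmap A := by
    intro A
    rw [phibar_eq_phibarHom]
    rfl
  set Dr : Matrix (Fin n × Fin s) (Fin n × Fin s) K := blockScalar n (rhoMat b ρ) with hDrdef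
  set Dri : Matrix (Fin n × Fin s) (Fin n × Fin s) K := blockScalar n (rhoMatInv b ρ σ)
    with hDridef
  have hDr1 : Dr * Dri = 1 := by
    rw [hDrdef, hDridef, blockScalar_mul, rho_mul_inv b ρ σ hσ, blockScalar_one]
  have hDr2 : Dri * Dr = 1 := mul_eq_one_comm.mp hDr1
  have hDrM1 : Dr.map ⇑am * Dri.map ⇑am = 1 := by
    rw [← Matrix.map_mul, hDr1, Matrix.map_one _ (map_zero am) (map_one am)]
  have hDrM2 : Dri.map ⇑am * Dr.map ⇑am = 1 := mul_eq_one_comm.mp hDrM1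
  set X' : Matrix (Fin n × Fin s) (Fin n × Fin s) M := gmap X * Dr.map ⇑am with hX'def
  set Y' : Matrix (Fin n × Fin s) (Fin n × Fin s) M := Dri.map ⇑am * gmap Y with hY'def
  have hX'u : IsUnit X' := (hX.map gmap).mul ⟨⟨Dr.map ⇑am, Dri.map ⇑am, hDrM1, hDrM2⟩, rfl⟩
  have hY'u : IsUnit Y' := IsUnit.mul ⟨⟨Dri.map ⇑am, Dr.map ⇑am, hDrM2, hDrM1⟩, rfl⟩ (hY.map gmap)
  -- the key pointwise identity
  have hkey : ∀ A : Matrix (Fin n) (Fin n) L,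
      gmap (X * A.map ⇑ρ * Y) = X' * (gmap A).map ⇑ρ' * Y' := by
    intro A
    rw [_root_.map_mul, _root_.map_mul]
    have h1 : gmap (A.map ⇑ρ)
        = Dr.map ⇑am * ((phibarHom b n A).map ⇑σ).map ⇑am * Dri.map ⇑am := by
      show am.mapMatrix (phibarHom b n (A.map ⇑ρ)) = _
      rw [RingHom.mapMatrix_apply, phibar_rho b ρ σ hσ A, Matrix.map_mul, Matrix.map_mul]
    have h2 : ((phibarHom b n A).map ⇑σ).map ⇑am = (gmap A).map ⇑ρ' := by
      show _ = (am.mapMatrix (phibarHom b n A)).map ⇑ρ'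
      rw [RingHom.mapMatrix_apply]
      ext p r
      simp only [Matrix.map_apply]
      exact (hρ' _).symm
    rw [h1, h2, hX'def, hY'def]
    simp only [mul_assoc]
  -- the semilinear equivalence
  haveI : RingHomSurjective (ρ' : M →+* M) := ⟨ρ'.surjective⟩
  let τ : Matrix (Fin n × Fin s) (Fin n × Fin s) M →ₛₗ[(ρ' : M →+* M)]
      Matrix (Fin n × Fin s) (Fin n × Fin s) M :=
    { toFun := fun N => X' * N.map ⇑ρ' * Y'
      map_add' := fun N1 N2 => by
        show X' * (N1 + N2).map ⇑ρ' * Y' = X' * N1.map ⇑ρ' * Y' + X' * N2.map ⇑ρ' * Y'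
        have h : (N1 + N2).map ⇑ρ' = N1.map ⇑ρ' + N2.map ⇑ρ' := by
          ext p r
          simp [Matrix.map_apply, Matrix.add_apply]
        rw [h, mul_add, add_mul]
      map_smul' := fun c N => by
        show X' * (c • N).map ⇑ρ' * Y' = ρ' c • (X' * N.map ⇑ρ' * Y')
        have h : (c • N).map ⇑ρ' = ρ' c • N.map ⇑ρ' := by
          ext p r
          simp [Matrix.map_apply, Matrix.smul_apply, smul_eq_mul]
        rw [h, mul_smul_comm, smul_mul_assoc] }
  have himg : (embSpace (M := M) b C' : Set (Matrix (Fin n × Fin s) (Fin n × Fin s) M)) =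
      (fun N => X' * N.map ⇑ρ' * Y') ''
        (embSpace (M := M) b C : Set (Matrix (Fin n × Fin s) (Fin n × Fin s) M)) := by
    have h1 : embSpace (M := M) b C' = Submodule.map τ (embSpace (M := M) b C) := by
      rw [embSpace, embSpace, Submodule.map_span]
      congr 1
      rw [hC', ← Set.image_comp, ← Set.image_comp]
      apply Set.image_congr
      intro A hA
      show (phibar b (X * A.map ⇑ρ * Y)).map (algebraMap K M)
        = X' * ((phibar b A).map (algebraMap K M)).map ⇑ρ' * Y'
      rw [hg, hg, hkey]
    rw [h1]
    rfl
  refine ⟨⟨X', Y', ρ', hX'u, hY'u, himg⟩, fun r => ?_⟩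
  -- rank preservation
  have hrank : ∀ N : Matrix (Fin n × Fin s) (Fin n × Fin s) M,
      (X' * N.map ⇑ρ' * Y').rank = N.rank := by
    intro N
    rw [mul_assoc, Matrix.rank_mul_eq_right_of_isUnit_det X' _
      ((Matrix.isUnit_iff_isUnit_det X').mp hX'u),
      Matrix.rank_mul_eq_left_of_isUnit_det Y' _
      ((Matrix.isUnit_iff_isUnit_det Y').mp hY'u),
      rank_map_ringEquiv]
  have hinj : Function.Injective (fun N : Matrix (Fin n × Fin s) (Fin n × Fin s) M =>
      X' * N.map ⇑ρ' * Y') := by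
    exact mulmap_inj hX'u hY'u ρ'
  have hset : {N ∈ (embSpace (M := M) b C' : Set (Matrix (Fin n × Fin s) (Fin n × Fin s) M)) |
      N.rank = r} = (fun N => X' * N.map ⇑ρ' * Y') ''
        {N ∈ (embSpace (M := M) b C : Set (Matrix (Fin n × Fin s) (Fin n × Fin s) M)) |
          N.rank = r} := by
    ext N
    constructor
    · rintro ⟨hN, hNr⟩
      rw [himg] at hN
      obtain ⟨N0, hN0, rfl⟩ := hN
      exact ⟨N0, ⟨hN0, by rw [← hrank N0]; exact hNr⟩, rfl⟩
    · rintro ⟨N0, ⟨h1, h2⟩, rfl⟩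
      refine ⟨?_, ?_⟩
      · rw [himg]
        exact Set.mem_image_of_mem _ h1
      · rw [hrank]
        exact h2
  rw [hset, Set.ncard_image_of_injective _ hinj]
end

section
/- Let C and C' be F_q-subspaces of M_n(F_{q^s}). If there exists some m ≥ 1 for which the multiset of ranks { rank(M) : M ∈ E_m(C) } differs from the multiset { rank(M) : M ∈ E_m(C') }, then there exist no invertible X, Y ∈ M_n(F_{q^s}) and field automorphism ρ of F_{q^s} with C' = { X A^ρ Y : A ∈ C }; that is, C and C' are inequivalent as matrix rank-metric codes. -/
section auxiliary

variable {K L : Type*} [Field K] [Field L] [Algebra K L] {s : ℕ} (b : Module.Basis (Fin s) K L)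

lemma phi_apply' (β : L) (i k : Fin s) : phi b β i k = b.repr (β * b k) i := by
  simp [phi, LinearMap.toMatrix_apply]

lemma repr_mul' (β z : L) (i : Fin s) :
    b.repr (β * z) i = ∑ k, b.repr z k * b.repr (β * b k) i := by
  conv_lhs => rw [← b.sum_repr z]
  rw [Finset.mul_sum, map_sum]
  simp only [mul_smul_comm, map_smul, Finsupp.coe_finset_sum, Finsupp.coe_smul,
    Finset.sum_apply, Pi.smul_apply, smul_eq_mul]

lemma repr_ringEquiv' (ρ : L ≃+* L) (σ : K ≃+* K)
    (hσ : ∀ c, algebraMap K L (σ c) = ρ (algebraMap K L c)) (y : L) (i : Fin s) :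
    b.repr (ρ y) i = ∑ k, σ (b.repr y k) * b.repr (ρ (b k)) i := by
  have hsmul : ∀ (c : K) (x : L), ρ (c • x) = σ c • ρ x := by
    intro c x
    rw [Algebra.smul_def, Algebra.smul_def, map_mul, hσ]
  conv_lhs => rw [← b.sum_repr y]
  rw [map_sum]
  simp only [hsmul]
  rw [map_sum]
  simp only [map_smul, Finsupp.coe_finset_sum, Finsupp.coe_smul,
    Finset.sum_apply, Pi.smul_apply, smul_eq_mul]

lemma exists_conj' (ρ : L ≃+* L) (σ : K ≃+* K)
    (hσ : ∀ c, algebraMap K L (σ c) = ρ (algebraMap K L c)) :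
    ∃ P P' : Matrix (Fin s) (Fin s) K, P * P' = 1 ∧ P' * P = 1 ∧
      ∀ α : L, phi b (ρ α) = P * (phi b α).map σ * P' := by
  classical
  set P : Matrix (Fin s) (Fin s) K := Matrix.of fun i j => b.repr (ρ (b j)) i with hP
  set P' : Matrix (Fin s) (Fin s) K :=
    Matrix.of fun i j => σ (b.repr (ρ.symm (b j)) i) with hP'
  have hPP' : P * P' = 1 := by
    ext i j
    rw [Matrix.mul_apply]
    have := (repr_ringEquiv' b ρ σ hσ (ρ.symm (b j)) i).symm
    rw [ρ.apply_symm_apply] at this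
    rw [Matrix.one_apply]
    calc ∑ k, P i k * P' k j = ∑ k, σ (b.repr (ρ.symm (b j)) k) * b.repr (ρ (b k)) i := by
          apply Finset.sum_congr rfl; intro k _; rw [hP, hP']; simp [mul_comm]
      _ = b.repr (b j) i := this
      _ = if i = j then 1 else 0 := by
          rw [b.repr_self, Finsupp.single_apply]
          simp [eq_comm]
  have hP'P : P' * P = 1 := mul_eq_one_comm.mp hPP'
  refine ⟨P, P', hPP', hP'P, fun α => ?_⟩
  have key : phi b (ρ α) * P = P * (phi b α).map σ := by
    ext i j
    rw [Matrix.mul_apply, Matrix.mul_apply]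
    have lhs : ∑ k, phi b (ρ α) i k * P k j = b.repr (ρ (α * b j)) i := by
      rw [map_mul]
      rw [repr_mul' b (ρ α) (ρ (b j)) i]
      apply Finset.sum_congr rfl; intro k _
      rw [phi_apply', hP]; simp [mul_comm]
    have rhs : ∑ k, P i k * (phi b α).map σ k j = b.repr (ρ (α * b j)) i := by
      rw [repr_ringEquiv' b ρ σ hσ (α * b j) i]
      apply Finset.sum_congr rfl; intro k _
      rw [hP, Matrix.map_apply, phi_apply']; simp [mul_comm]
    rw [lhs, rhs]
  calc phi b (ρ α) = phi b (ρ α) * (P * P') := by rw [hPP', mul_one]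
    _ = (phi b (ρ α) * P) * P' := by rw [mul_assoc]
    _ = P * (phi b α).map σ * P' := by rw [key]

open Polynomial in
lemma range_algebraMap_eq' {K L : Type*} [Field K] [Fintype K] [Field L] [Fintype L]
    [Algebra K L] :
    Set.range (algebraMap K L) = {x : L | x ^ Fintype.card K = x} := by
  have hinj : Function.Injective (algebraMap K L) := (algebraMap K L).injective
  have hsub : Set.range (algebraMap K L) ⊆ {x : L | x ^ Fintype.card K = x} := by
    rintro _ ⟨c, rfl⟩
    simp only [Set.mem_setOf_eq, ← map_pow, FiniteField.pow_card]
  have hq : 1 < Fintype.card K := Fintype.one_lt_card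
  classical
  have hT : {x : L | x ^ Fintype.card K = x} ⊆
      ↑((X ^ Fintype.card K - X : L[X]).roots.toFinset) := by
    intro x hx
    simp only [Set.mem_setOf_eq] at hx
    have hne : (X ^ Fintype.card K - X : L[X]) ≠ 0 := by
      intro h
      have := FiniteField.X_pow_card_sub_X_natDegree_eq L hq
      rw [h] at this
      simp only [natDegree_zero] at this
      omega
    simp only [Finset.coe_sort_coe, Multiset.mem_toFinset, Finset.mem_coe,
      mem_roots hne, IsRoot.def, eval_sub, eval_pow, eval_X]
    exact sub_eq_zero_of_eq hx
  have hcard : ({x : L | x ^ Fintype.card K = x}).ncard ≤ Fintype.card K := by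
    refine le_trans (Set.ncard_le_ncard hT (Set.toFinite _)) ?_
    rw [Set.ncard_coe_finset]
    calc ((X ^ Fintype.card K - X : L[X]).roots.toFinset).card
        ≤ Multiset.card (X ^ Fintype.card K - X : L[X]).roots := Multiset.toFinset_card_le _
      _ ≤ (X ^ Fintype.card K - X : L[X]).natDegree := card_roots' _
      _ = Fintype.card K := FiniteField.X_pow_card_sub_X_natDegree_eq L hq
  have hrange : (Set.range (algebraMap K L)).ncard = Fintype.card K := by
    rw [← Nat.card_coe_set_eq, Nat.card_range_of_injective hinj, Nat.card_eq_fintype_card]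
  exact Set.eq_of_subset_of_ncard_le hsub (by rw [hrange]; exact hcard) (Set.toFinite _)

lemma exists_sigma' {K L : Type*} [Field K] [Fintype K] [Field L] [Fintype L]
    [Algebra K L] (ρ : L ≃+* L) :
    ∃ σ : K ≃+* K, ∀ c, algebraMap K L (σ c) = ρ (algebraMap K L c) := by
  have hinj : Function.Injective (algebraMap K L) := (algebraMap K L).injective
  have hmem : ∀ c : K, ρ (algebraMap K L c) ∈ Set.range (algebraMap K L) := by
    intro c
    rw [range_algebraMap_eq']
    have h1 : algebraMap K L c ∈ {x : L | x ^ Fintype.card K = x} := by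
      rw [← range_algebraMap_eq']; exact ⟨c, rfl⟩
    simp only [Set.mem_setOf_eq] at h1 ⊢
    rw [← map_pow, h1]
  choose g hg using hmem
  have hadd : ∀ a c : K, g (a + c) = g a + g c := by
    intro a c; apply hinj; rw [map_add, hg, hg, hg, map_add, map_add]
  have hmul : ∀ a c : K, g (a * c) = g a * g c := by
    intro a c; apply hinj; rw [map_mul, hg, hg, hg, map_mul, map_mul]
  have hone : g 1 = 1 := by apply hinj; rw [hg, map_one, map_one]
  have hzero : g 0 = 0 := by apply hinj; rw [hg, map_zero, map_zero]
  let σ₀ : K →+* K := ⟨⟨⟨g, hone⟩, hmul⟩, hzero, hadd⟩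
  have hginj : Function.Injective g := by
    intro a c h
    apply hinj
    apply ρ.injective
    rw [← hg, ← hg, h]
  obtain ⟨σ, hσ⟩ : ∃ σ : K ≃+* K, ⇑σ = g :=
    ⟨RingEquiv.ofBijective σ₀ ((Finite.injective_iff_bijective).mp hginj), rfl⟩
  exact ⟨σ, fun c => by rw [hσ]; exact hg c⟩

lemma exists_tau' {K M : Type*} [Field K] [Fintype K] [Field M] [Fintype M]
    [Algebra K M] (σ : K ≃+* K) :
    ∃ τ : M ≃+* M, ∀ c, τ (algebraMap K M c) = algebraMap K M (σ c) := by
  obtain ⟨p, hchar⟩ := CharP.exists K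
  haveI : CharP K p := hchar
  haveI : CharP M p := charP_of_injective_ringHom (algebraMap K M).injective p
  haveI hp : Fact p.Prime := ⟨CharP.char_is_prime K p⟩
  letI : Algebra (ZMod p) K := ZMod.algebra K p
  letI : Algebra (ZMod p) M := ZMod.algebra M p
  haveI : IsScalarTower (ZMod p) K M :=
    IsScalarTower.of_algebraMap_eq' (RingHom.ext_zmod _ _)
  haveI : Normal (ZMod p) M :=
    Normal.of_isSplittingField (Polynomial.X ^ Fintype.card M - Polynomial.X)
  let σalg : K →ₐ[ZMod p] K :=
    { toRingHom := σ.toRingHom,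
      commutes' := fun z => RingHom.congr_fun
        (RingHom.ext_zmod (σ.toRingHom.comp (algebraMap (ZMod p) K)) (algebraMap (ZMod p) K)) z }
  let τ' : M →ₐ[ZMod p] M := σalg.liftNormal M
  have hbij : Function.Bijective τ'.toRingHom :=
    (Finite.injective_iff_bijective).mp τ'.toRingHom.injective
  refine ⟨RingEquiv.ofBijective τ'.toRingHom hbij, fun c => ?_⟩
  exact AlgHom.liftNormal_commutes σalg M c

lemma rank_map_ringEquiv' {F : Type*} [Field F] {ι κ : Type*} [Fintype κ]
    (A : Matrix ι κ F) (τ : F ≃+* F) : (A.map ⇑τ).rank = A.rank := by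
  let E : (ι → F) ≃+ (ι → F) := AddEquiv.piCongrRight (fun _ => τ.toAddEquiv)
  have hE : ∀ (v : κ → F), (A.map ⇑τ).mulVec (⇑τ ∘ v) = E (A.mulVec v) := by
    intro v
    funext i
    show _ = τ _
    simp only [Matrix.mulVec, dotProduct, Function.comp_apply, Matrix.map_apply]
    rw [map_sum]
    exact Finset.sum_congr rfl fun j _ => (map_mul τ _ _).symm
  have hrange : ∀ x : ι → F,
      x ∈ LinearMap.range (A.map ⇑τ).mulVecLin ↔
        ∃ y ∈ LinearMap.range A.mulVecLin, E y = x := by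
    intro x
    constructor
    · rintro ⟨v, rfl⟩
      refine ⟨A.mulVec (⇑τ.symm ∘ v), ⟨_, rfl⟩, ?_⟩
      have h2 := hE (⇑τ.symm ∘ v)
      rw [show ⇑τ ∘ (⇑τ.symm ∘ v) = v from funext fun k => τ.apply_symm_apply (v k)] at h2
      rw [Matrix.mulVecLin_apply, h2]
    · rintro ⟨y, ⟨v, rfl⟩, rfl⟩
      refine ⟨⇑τ ∘ v, ?_⟩
      simp only [Matrix.mulVecLin_apply]
      exact hE v
  let j : LinearMap.range A.mulVecLin ≃+ LinearMap.range (A.map ⇑τ).mulVecLin :=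
    { toFun := fun x => ⟨E x, (hrange _).mpr ⟨x, x.2, rfl⟩⟩,
      invFun := fun y => ⟨E.symm y, by
        obtain ⟨z, hz, hez⟩ := (hrange y).mp y.2
        rw [← hez, AddEquiv.symm_apply_apply]; exact hz⟩,
      left_inv := fun x => by ext : 1; simp,
      right_inv := fun y => by ext : 1; simp,
      map_add' := fun x y => by ext : 1; simp }
  have hrk : Module.rank F (LinearMap.range A.mulVecLin) =
      Module.rank F (LinearMap.range (A.map ⇑τ).mulVecLin) := by
    refine rank_eq_of_equiv_equiv (ZeroHom.mk ⇑τ (map_zero τ)) j τ.bijective ?_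
    intro r x
    ext i
    show E (r • (x : ι → F)) i = (τ r • E (x : ι → F)) i
    simp [E, mul_comm]
  unfold Matrix.rank Module.finrank
  rw [hrk]

end auxiliary

/-- If for some `m ≥ 1` the rank distributions of `E_m(C)` and
`E_m(C')` differ, then there are no invertible `X, Y ∈ Mₙ(F_{q^s})` and field
automorphism `ρ` of `F_{q^s}` with `C' = { X A^ρ Y : A ∈ C }`; that is, `C` and `C'`
are inequivalent as matrix rank-metric codes. -/
theorem inequiv_of_embSpace_rank_ne (q s n m : ℕ) (hq : IsPrimePow q) (hs : 1 ≤ s)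
    (hn : 1 ≤ n) (hm : 1 ≤ m) (K L M : Type*) [Field K] [Fintype K] [Field L] [Fintype L]
    [Field M] [Fintype M] [Algebra K L] [Algebra K M] (hKcard : Fintype.card K = q)
    (hLcard : Fintype.card L = q ^ s) (hMcard : Fintype.card M = q ^ m)
    (b : Module.Basis (Fin s) K L)
    (C C' : Submodule K (Matrix (Fin n) (Fin n) L))
    (hne : ∃ r : ℕ,
        {N ∈ (embSpace (M := M) b C : Set (Matrix (Fin n × Fin s) (Fin n × Fin s) M)) |
            N.rank = r}.ncard ≠
        {N ∈ (embSpace (M := M) b C' : Set (Matrix (Fin n × Fin s) (Fin n × Fin s) M)) |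
            N.rank = r}.ncard) :
    ¬ ∃ (X Y : Matrix (Fin n) (Fin n) L) (ρ : L ≃+* L), IsUnit X ∧ IsUnit Y ∧
        (C' : Set (Matrix (Fin n) (Fin n) L)) =
          (fun A => X * A.map ρ * Y) '' (C : Set (Matrix (Fin n) (Fin n) L)) := by
  rintro ⟨X, Y, ρ, hX, hY, hCC⟩
  obtain ⟨r, hr⟩ := hne
  refine hr ?_
  classical
  obtain ⟨σ, hσ⟩ := exists_sigma' (K := K) (L := L) ρ
  obtain ⟨τ, hτ⟩ := exists_tau' (K := K) (M := M) σ
  obtain ⟨P, P', hPP', hP'P, hconj⟩ := exists_conj' b ρ σ hσ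
  set e := Matrix.compRingEquiv (Fin n) (Fin s) K with he
  -- the representation `phibar` as a ring homomorphism
  let phibarRH : Matrix (Fin n) (Fin n) L →+* Matrix (Fin n × Fin s) (Fin n × Fin s) K :=
    e.toRingHom.comp ((Algebra.leftMulMatrix b).toRingHom.mapMatrix)
  have hφb : ∀ A : Matrix (Fin n) (Fin n) L, phibar b A = phibarRH A := fun _ => rfl
  -- the block-diagonal conjugating matrices
  set DQ : Matrix (Fin n × Fin s) (Fin n × Fin s) K :=
    e (Matrix.diagonal fun _ => P) with hDQ
  set DQ' : Matrix (Fin n × Fin s) (Fin n × Fin s) K :=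
    e (Matrix.diagonal fun _ => P') with hDQ'
  have hDD : DQ * DQ' = 1 := by
    rw [hDQ, hDQ', ← map_mul, Matrix.diagonal_mul_diagonal]
    simp only [hPP', Matrix.diagonal_one, map_one]
  have hDD' : DQ' * DQ = 1 := by
    rw [hDQ, hDQ', ← map_mul, Matrix.diagonal_mul_diagonal]
    simp only [hP'P, Matrix.diagonal_one, map_one]
  -- the key conjugation identity for `phibar`
  have hkey : ∀ A : Matrix (Fin n) (Fin n) L,
      phibar b (A.map ⇑ρ) = DQ * (phibar b A).map ⇑σ * DQ' := by
    intro A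
    have hblock : (A.map ⇑ρ).map (phi b) =
        (Matrix.diagonal fun _ : Fin n => P) *
          (A.map fun a => (phi b a).map ⇑σ) * (Matrix.diagonal fun _ : Fin n => P') := by
      refine Matrix.ext fun i j => ?_
      rw [Matrix.mul_diagonal, Matrix.diagonal_mul]
      exact hconj (A i j)
    have : phibar b (A.map ⇑ρ) = e ((A.map ⇑ρ).map (phi b)) := rfl
    rw [this, hblock, map_mul, map_mul]
    rfl
  -- the embedded conjugating matrices over M
  set gK := algebraMap K M with hgK
  set P1 : Matrix (Fin n × Fin s) (Fin n × Fin s) M := (phibar b X * DQ).map gK with hP1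
  set P2 : Matrix (Fin n × Fin s) (Fin n × Fin s) M := (DQ' * phibar b Y).map gK with hP2
  have hDQu : IsUnit DQ := ⟨⟨DQ, DQ', hDD, hDD'⟩, rfl⟩
  have hDQ'u : IsUnit DQ' := ⟨⟨DQ', DQ, hDD', hDD⟩, rfl⟩
  have hXu : IsUnit (phibar b X) := by rw [hφb]; exact hX.map phibarRH
  have hYu : IsUnit (phibar b Y) := by rw [hφb]; exact hY.map phibarRH
  have hP1u : IsUnit P1 := by
    rw [hP1]
    exact (hXu.mul hDQu).map gK.mapMatrix
  have hP2u : IsUnit P2 := by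
    rw [hP2]
    exact (hDQ'u.mul hYu).map gK.mapMatrix
  -- the rank-preserving bijection
  set Φ : Matrix (Fin n × Fin s) (Fin n × Fin s) M → Matrix (Fin n × Fin s) (Fin n × Fin s) M :=
    fun N => P1 * N.map ⇑τ * P2 with hΦ
  -- pointwise compatibility
  have keyM : ∀ A : Matrix (Fin n) (Fin n) L,
      (phibar b (X * A.map ⇑ρ * Y)).map gK = Φ ((phibar b A).map gK) := by
    intro A
    have h1 : phibar b (X * A.map ⇑ρ * Y) =
        (phibar b X * DQ) * (phibar b A).map ⇑σ * (DQ' * phibar b Y) := by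
      rw [hφb, map_mul, map_mul, ← hφb, ← hφb, ← hφb, hkey]
      simp only [mul_assoc]
    have h2 : ((phibar b A).map ⇑σ).map ⇑gK = ((phibar b A).map ⇑gK).map ⇑τ := by
      have hfun : (⇑gK ∘ ⇑σ) = (⇑τ ∘ ⇑gK) := funext fun x => (hτ x).symm
      rw [Matrix.map_map, Matrix.map_map, hfun]
    calc (phibar b (X * A.map ⇑ρ * Y)).map gK
        = gK.mapMatrix ((phibar b X * DQ) * (phibar b A).map ⇑σ * (DQ' * phibar b Y)) := by
          rw [h1]; rfl
      _ = P1 * ((phibar b A).map ⇑σ).map ⇑gK * P2 := by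
          rw [map_mul, map_mul]; rfl
      _ = Φ ((phibar b A).map gK) := by rw [h2]
  -- Φ as a τ-semilinear map
  haveI : RingHomSurjective (τ : M →+* M) := ⟨τ.surjective⟩
  let Ψ : Matrix (Fin n × Fin s) (Fin n × Fin s) M →ₛₗ[(τ : M →+* M)]
      Matrix (Fin n × Fin s) (Fin n × Fin s) M :=
    { toFun := Φ,
      map_add' := fun N N' => by
        show P1 * (N + N').map ⇑τ * P2 = P1 * N.map ⇑τ * P2 + P1 * N'.map ⇑τ * P2
        have : (N + N').map ⇑τ = N.map ⇑τ + N'.map ⇑τ := by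
          ext i j; simp [map_add]
        rw [this, Matrix.mul_add, Matrix.add_mul]
      map_smul' := fun c N => by
        show P1 * (c • N).map ⇑τ * P2 = τ c • (P1 * N.map ⇑τ * P2)
        have : (c • N).map ⇑τ = τ c • N.map ⇑τ := by
          ext i j; simp [map_mul]
        rw [this, Matrix.mul_smul, Matrix.smul_mul] }
  -- image of the embedded space
  have himg : (embSpace (M := M) b C' : Set (Matrix (Fin n × Fin s) (Fin n × Fin s) M)) =
      Φ '' (embSpace (M := M) b C : Set (Matrix (Fin n × Fin s) (Fin n × Fin s) M)) := by
    have hsub : embSpace (M := M) b C' = Submodule.map Ψ (embSpace (M := M) b C) := by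
      unfold embSpace
      rw [Submodule.map_span]
      congr 1
      rw [hCC, ← Set.image_comp, ← Set.image_comp]
      apply Set.image_congr
      intro A _
      exact keyM A
    rw [hsub]
    rfl
  -- Φ preserves rank
  have hΦrank : ∀ N : Matrix (Fin n × Fin s) (Fin n × Fin s) M, (Φ N).rank = N.rank := by
    intro N
    rw [hΦ]
    show (P1 * N.map ⇑τ * P2).rank = N.rank
    rw [Matrix.rank_mul_eq_left_of_isUnit_det P2 _ ((Matrix.isUnit_iff_isUnit_det _).mp hP2u),
      Matrix.rank_mul_eq_right_of_isUnit_det P1 _ ((Matrix.isUnit_iff_isUnit_det _).mp hP1u),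
      rank_map_ringEquiv']
  -- Φ is injective
  have hΦinj : Function.Injective Φ := by
    intro N N' h
    rw [hΦ] at h
    have h1 : N.map ⇑τ = N'.map ⇑τ := by
      have h2 := hP2u.mul_right_cancel h
      exact hP1u.mul_left_cancel h2
    ext i j
    apply τ.injective
    have := congrArg (fun Q : Matrix (Fin n × Fin s) (Fin n × Fin s) M => Q i j) h1
    exact this
  -- conclude the rank distributions agree
  have hset : {N ∈ (embSpace (M := M) b C' :
        Set (Matrix (Fin n × Fin s) (Fin n × Fin s) M)) | N.rank = r} =
      Φ '' {N ∈ (embSpace (M := M) b C :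
        Set (Matrix (Fin n × Fin s) (Fin n × Fin s) M)) | N.rank = r} := by
    ext N'
    simp only [Set.mem_setOf_eq, Set.mem_image, himg]
    constructor
    · rintro ⟨⟨N, hN, rfl⟩, hrank⟩
      exact ⟨N, ⟨hN, by rw [← hΦrank N]; exact hrank⟩, rfl⟩
    · rintro ⟨N, ⟨hN, hrank⟩, rfl⟩
      exact ⟨⟨N, hN, rfl⟩, by rw [hΦrank]; exact hrank⟩
  rw [hset, Set.ncard_image_of_injective _ hΦinj]
end

section
/- There exists an invertible matrix W ∈ M_{ns}(F_{q^s}) such that for every A ∈ M_n(F_{q^s}), W · φ̄(A) = ψ(A) · W, where φ̄(A) is viewed in M_{ns}(F_{q^s}) via the inclusion F_q ⊆ F_{q^s}. That is, a single invertible matrix simultaneously conjugates the block regular representation φ̄(A) of every matrix A to the block-diagonal matrix ψ(A) = A ⊕ A^σ ⊕ ⋯ ⊕ A^{σ^{s−1}}. -/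
/-- `ψ : Mₙ(F_{q^s}) → M_{ns}(F_{q^s})`, `ψ(A) = A ⊕ A^σ ⊕ ⋯ ⊕ A^{σ^{s−1}}`, the
block-diagonal matrix of the entrywise Frobenius twists of `A` (here `q` is passed
explicitly and `σ^j` is `x ↦ x^{q^j}` entrywise). -/
def psi {L : Type*} [Field L] (q s n : ℕ) (A : Matrix (Fin n) (Fin n) L) :
    Matrix (Fin n × Fin s) (Fin n × Fin s) L :=
  Matrix.blockDiagonal fun u : Fin s => A.map fun x => x ^ q ^ (u : ℕ)

/-- There is a single invertible matrix `W ∈ M_{ns}(F_{q^s})`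
that simultaneously conjugates the block regular representation `φ̄(A)` of every
`A ∈ Mₙ(F_{q^s})` to the block-diagonal matrix `ψ(A) = A ⊕ A^σ ⊕ ⋯ ⊕ A^{σ^{s−1}}`:
`W · φ̄(A) = ψ(A) · W` for all `A`, where `φ̄(A)` is viewed in `M_{ns}(F_{q^s})`
via `F_q ⊆ F_{q^s}`. -/
theorem exists_simultaneous_conjugation_to_psi (q s n : ℕ) (hq : IsPrimePow q)
    (hs : 1 ≤ s) (hn : 1 ≤ n) (K L : Type*) [Field K] [Fintype K] [Field L] [Fintype L]
    [Algebra K L] (hKcard : Fintype.card K = q) (hLcard : Fintype.card L = q ^ s)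
    (b : Module.Basis (Fin s) K L) :
    ∃ W : Matrix (Fin n × Fin s) (Fin n × Fin s) L, IsUnit W ∧
      ∀ A : Matrix (Fin n) (Fin n) L,
        W * (phibar b A).map (algebraMap K L) = psi q s n A * W := by
  classical
  obtain ⟨p, k, hp, hk, hpk⟩ := hq
  have hp' : p.Prime := Nat.prime_iff.mpr hp
  haveI := Fact.mk hp'
  have hq2 : 2 ≤ q := by
    calc 2 ≤ p := hp'.two_le
    _ ≤ p ^ k := Nat.le_self_pow (by omega) p
    _ = q := hpk
  haveI hcharL : CharP L p := by
    have h0 : (Fintype.card L : L) = 0 := FiniteField.cast_card_eq_zero L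
    have hr : CharP L (ringChar L) := ringChar.charP L
    have hrprime : (ringChar L).Prime := CharP.char_is_prime L (ringChar L)
    have hdvd : ringChar L ∣ p ^ (k * s) := by
      rw [pow_mul, hpk, ← hLcard]
      exact (CharP.cast_eq_zero_iff L (ringChar L) _).mp h0
    have : ringChar L = p :=
      (Nat.prime_dvd_prime_iff_eq hrprime hp').mp (hrprime.dvd_of_dvd_pow hdvd)
    rwa [this] at hr
  have hqpow : ∀ u : ℕ, q ^ u = p ^ (k * u) := by intro u; rw [pow_mul, hpk]
  set F : ℕ → L →+* L := fun u => iterateFrobenius L p (k * u) with hF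
  have hFdef : ∀ (u : ℕ) (x : L), F u x = x ^ q ^ u := by
    intro u x
    show iterateFrobenius L p (k * u) x = x ^ q ^ u
    rw [iterateFrobenius_def, hqpow]
  have hfix : ∀ (u : ℕ) (c : K), (algebraMap K L c) ^ q ^ u = algebraMap K L c := by
    intro u c
    rw [← map_pow]
    congr 1
    have := FiniteField.pow_card_pow u c
    rwa [hKcard] at this
  -- Key relation: the Moore matrix intertwines the regular representation
  have keyA : ∀ (α : L) (u v : Fin s),
      (∑ w : Fin s, algebraMap K L (phi b α w v) * (b w) ^ q ^ (u : ℕ))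
        = α ^ q ^ (u : ℕ) * (b v) ^ q ^ (u : ℕ) := by
    intro α u v
    have h0 : (∑ w : Fin s, algebraMap K L (phi b α w v) * b w) = α * b v := by
      have h1 := b.sum_repr (α * b v)
      simp only [Algebra.smul_def] at h1
      rw [← h1]
      refine Finset.sum_congr rfl fun w _ => ?_
      congr 2
      simp [phi, LinearMap.toMatrix_apply, LinearMap.mulLeft_apply]
    calc (∑ w : Fin s, algebraMap K L (phi b α w v) * (b w) ^ q ^ (u : ℕ))
        = ∑ w : Fin s, F (u : ℕ) (algebraMap K L (phi b α w v) * b w) := by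
          refine Finset.sum_congr rfl fun w _ => ?_
          rw [map_mul, hFdef, hFdef, hfix]
      _ = F (u : ℕ) (∑ w : Fin s, algebraMap K L (phi b α w v) * b w) :=
          (map_sum (F (u : ℕ)) _ _).symm
      _ = F (u : ℕ) (α * b v) := by rw [h0]
      _ = α ^ q ^ (u : ℕ) * (b v) ^ q ^ (u : ℕ) := by rw [map_mul, hFdef, hFdef]
  -- the Moore matrix
  set M : Matrix (Fin s) (Fin s) L := fun u w => (b w) ^ q ^ (u : ℕ) with hM
  have hdetM : M.det ≠ 0 := by
    intro hdet
    obtain ⟨c, hc0, hcM⟩ := Matrix.exists_vecMul_eq_zero_iff.mpr hdet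
    -- build the K-linear maps x ↦ x ^ q ^ u
    have hFlin : ∀ u : Fin s, ∃ f : L →ₗ[K] L, ∀ x, f x = x ^ q ^ (u : ℕ) := by
      intro u
      refine ⟨{ toFun := fun x => x ^ q ^ (u : ℕ), map_add' := ?_, map_smul' := ?_ },
        fun x => rfl⟩
      · intro x y
        show (x + y) ^ q ^ (u : ℕ) = x ^ q ^ (u : ℕ) + y ^ q ^ (u : ℕ)
        rw [← hFdef, ← hFdef, ← hFdef, map_add]
      · intro m x
        simp only [RingHom.id_apply, Algebra.smul_def, mul_pow, hfix]
    choose f hf using hFlin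
    have hG : (∑ u : Fin s, c u • f u) = 0 := by
      refine b.ext fun w => ?_
      simp only [LinearMap.sum_apply, LinearMap.smul_apply, LinearMap.zero_apply, hf,
        smul_eq_mul]
      have := congrFun hcM w
      simpa [Matrix.vecMul, dotProduct, hM] using this
    have hallx : ∀ x : L, ∑ u : Fin s, c u * x ^ q ^ (u : ℕ) = 0 := by
      intro x
      have := LinearMap.congr_fun hG x
      simpa [LinearMap.sum_apply, LinearMap.smul_apply, hf, smul_eq_mul] using this
    -- independence of the power maps
    obtain ⟨g, hg⟩ := IsCyclic.exists_generator (α := Lˣ)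
    have horder : orderOf g = q ^ s - 1 := by
      rw [orderOf_eq_card_of_forall_mem_zpowers hg, Nat.card_eq_fintype_card,
        Fintype.card_units, hLcard]
    have hinj : Function.Injective fun u : Fin s => (powMonoidHom (q ^ (u : ℕ)) : L →* L) := by
      intro u w huw
      rcases Nat.lt_or_ge 1 s with hs2 | hs1
      · have hbound : ∀ v : Fin s, q ^ (v : ℕ) < q ^ s - 1 := by
          intro v
          have h1 : q ^ (v : ℕ) ≤ q ^ (s - 1) :=
            Nat.pow_le_pow_right (by omega) (by omega)
          have h2 : q ^ (s - 1) * q ≤ q ^ s := by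
            rw [← pow_succ]
            exact Nat.pow_le_pow_right (by omega) (by omega)
          have h3 : 2 ≤ q ^ (s - 1) := by
            calc 2 ≤ q := hq2
            _ = q ^ 1 := (pow_one q).symm
            _ ≤ q ^ (s - 1) := Nat.pow_le_pow_right (by omega) (by omega)
          have h4 : q ^ (s - 1) * 2 ≤ q ^ (s - 1) * q := Nat.mul_le_mul_left _ hq2
          omega
        have hgl : (g : L) ^ q ^ (u : ℕ) = (g : L) ^ q ^ (w : ℕ) := by
          have := DFunLike.congr_fun huw (g : L)
          simpa [powMonoidHom] using this
        have hgu : g ^ q ^ (u : ℕ) = g ^ q ^ (w : ℕ) := by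
          ext; push_cast; exact hgl
        have heq : q ^ (u : ℕ) = q ^ (w : ℕ) :=
          pow_injOn_Iio_orderOf (by rw [horder]; exact Set.mem_Iio.mpr (hbound u))
            (by rw [horder]; exact Set.mem_Iio.mpr (hbound w)) hgu
        exact Fin.ext (Nat.pow_right_injective hq2 heq)
      · have hs1' : s = 1 := by omega
        subst hs1'
        exact Subsingleton.elim u w
    have hli : LinearIndependent L
        (fun u : Fin s => ⇑(powMonoidHom (q ^ (u : ℕ)) : L →* L)) :=
      (linearIndependent_monoidHom L L).comp _ hinj
    have hzero : ∀ u : Fin s, c u = 0 := by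
      refine Fintype.linearIndependent_iff.mp hli c ?_
      funext x
      simpa [Finset.sum_apply, powMonoidHom, Pi.smul_apply, smul_eq_mul] using hallx x
    exact hc0 (funext hzero)
  -- the conjugating matrix
  set W : Matrix (Fin n × Fin s) (Fin n × Fin s) L :=
    fun pr rr => if pr.1 = rr.1 then M pr.2 rr.2 else 0 with hWdef
  refine ⟨W, ?_, ?_⟩
  · have hWeq : W = Matrix.reindex (Equiv.prodComm (Fin s) (Fin n))
        (Equiv.prodComm (Fin s) (Fin n)) (Matrix.blockDiagonal fun _ : Fin n => M) := by
      ext ⟨i, u⟩ ⟨j, v⟩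
      simp [hWdef, Matrix.blockDiagonal_apply, Matrix.reindex_apply,
        Matrix.submatrix_apply, Equiv.prodComm]
    rw [Matrix.isUnit_iff_isUnit_det, hWeq, Matrix.det_reindex_self,
      Matrix.det_blockDiagonal, Finset.prod_const]
    exact (isUnit_iff_ne_zero.mpr hdetM).pow _
  · intro A
    ext ⟨i, u⟩ ⟨j, v⟩
    rw [Matrix.mul_apply, Matrix.mul_apply, Fintype.sum_prod_type, Fintype.sum_prod_type]
    have hlhs : (∑ x : Fin n, ∑ y : Fin s,
        W (i, u) (x, y) * ((phibar b A).map (algebraMap K L)) (x, y) (j, v))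
        = ∑ y : Fin s, algebraMap K L (phi b (A i j) y v) * (b y) ^ q ^ (u : ℕ) := by
      simp only [hWdef, Matrix.map_apply, phibar, ite_mul, zero_mul]
      rw [Finset.sum_comm]
      simp [Finset.sum_ite_eq, mul_comm, hM]
    have hrhs : (∑ x : Fin n, ∑ y : Fin s,
        psi q s n A (i, u) (x, y) * W (x, y) (j, v))
        = (A i j) ^ q ^ (u : ℕ) * (b v) ^ q ^ (u : ℕ) := by
      simp only [psi, Matrix.blockDiagonal_apply, Matrix.map_apply, hWdef, ite_mul,
        mul_ite, zero_mul, mul_zero]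
      simp [Finset.sum_ite_eq, Finset.sum_ite_eq', hM]
    rw [hlhs, hrhs, keyA]
end

section
/- Let L be a positive multiple of s and ι : F_{q^s} ↪ F_{q^L} the field embedding (applied entrywise to matrices, and composed with F_q ⊆ F_{q^s} for matrices over F_q). Then for all α_1, …, α_k ∈ F_{q^L} and all A_1, …, A_k ∈ M_n(F_{q^s}): rank( Σ_{i=1}^k α_i · ι(φ̄(A_i)) ) = Σ_{j=0}^{s−1} rank( Σ_{i=1}^k α_i · ι(A_i^{σ^j}) ), where all ranks are taken over F_{q^L}. -/
open Matrix Kronecker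

section RankBlockDiagonal

variable {o m n K : Type*} [Fintype o] [DecidableEq o] [Fintype m] [Fintype n] [Field K]

/-- Regrouping equiv `(m × o → K) ≃ₗ[K] (o → m → K)`. -/
def regroupAux (o m K : Type*) [Field K] : ((m × o) → K) ≃ₗ[K] (o → m → K) where
  toFun v k j := v (j, k)
  invFun w p := w p.2 p.1
  map_add' _ _ := rfl
  map_smul' _ _ := rfl
  left_inv _ := rfl
  right_inv _ := rfl

/-- Equiv between `Submodule.pi` and pi of submodules. -/
def piSubEquivAux {p : o → Submodule K (m → K)} :
    (Submodule.pi Set.univ p) ≃ₗ[K] Π k, p k where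
  toFun x k := ⟨x.1 k, x.2 k (Set.mem_univ k)⟩
  invFun x := ⟨fun k => x k, fun k _ => (x k).2⟩
  map_add' _ _ := rfl
  map_smul' _ _ := rfl
  left_inv _ := rfl
  right_inv _ := rfl

omit [Fintype m] in
lemma rank_blockDiagonalAux (S : o → Matrix m n K) :
    (Matrix.blockDiagonal S).rank = ∑ k, (S k).rank := by
  classical
  have hmv : ∀ v : n × o → K, (Matrix.blockDiagonal S).mulVec v
      = fun p => (S p.2).mulVec (fun j => v (j, p.2)) p.1 := by
    intro v
    funext p
    simp [Matrix.mulVec, dotProduct, Fintype.sum_prod_type,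
      Matrix.blockDiagonal_apply, ite_mul, Finset.sum_ite_eq]
  have hrange : Submodule.map (regroupAux o m K).toLinearMap
      (LinearMap.range (Matrix.blockDiagonal S).mulVecLin)
      = Submodule.pi Set.univ (fun k => LinearMap.range (S k).mulVecLin) := by
    ext w
    simp only [Submodule.mem_map, LinearMap.mem_range, Submodule.mem_pi, Set.mem_univ,
      forall_true_left]
    constructor
    · rintro ⟨x, ⟨v, rfl⟩, rfl⟩ k
      refine ⟨fun j => v (j, k), ?_⟩
      funext i
      simp only [Matrix.mulVecLin_apply, regroupAux, LinearEquiv.coe_mk, LinearMap.coe_mk,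
        AddHom.coe_mk]
      rw [hmv v]
    · intro h
      choose u hu using h
      refine ⟨(Matrix.blockDiagonal S).mulVecLin (fun p => u p.2 p.1), ⟨_, rfl⟩, ?_⟩
      funext k i
      simp only [Matrix.mulVecLin_apply, regroupAux, LinearEquiv.coe_mk, LinearMap.coe_mk,
        AddHom.coe_mk]
      rw [hmv]
      simpa using congrFun (hu k) i
  calc (Matrix.blockDiagonal S).rank
      = Module.finrank K (LinearMap.range (Matrix.blockDiagonal S).mulVecLin) := rfl
    _ = Module.finrank K (Submodule.map (regroupAux o m K).toLinearMap
          (LinearMap.range (Matrix.blockDiagonal S).mulVecLin)) :=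
        (LinearEquiv.finrank_map_eq _ _).symm
    _ = Module.finrank K (Submodule.pi Set.univ (fun k => LinearMap.range (S k).mulVecLin)) := by
        rw [hrange]
    _ = Module.finrank K (Π k, LinearMap.range (S k).mulVecLin) :=
        (piSubEquivAux (p := fun k => LinearMap.range (S k).mulVecLin)).finrank_eq
    _ = ∑ k, (S k).rank := Module.finrank_pi_fintype K

end RankBlockDiagonal

/-- Let `L₀` be a positive multiple of `s` and
`ι : F_{q^s} ↪ F_{q^{L₀}}` the field embedding (here `E = F_{q^{L₀}}` is a common
extension of `F_q ⊆ F_{q^s}`, which is exactly the condition `s ∣ L₀`).  Then for all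
`α₁, …, α_k ∈ F_{q^{L₀}}` and `A₁, …, A_k ∈ Mₙ(F_{q^s})`,
`rank(Σᵢ αᵢ·ι(φ̄(Aᵢ))) = Σ_{j=0}^{s−1} rank(Σᵢ αᵢ·ι(Aᵢ^{σʲ}))`,
ranks taken over `F_{q^{L₀}}`. -/
theorem rank_phibar_sum_eq_sum_rank_frobenius (q s n k L₀ : ℕ) (hq : IsPrimePow q)
    (hs : 1 ≤ s) (hn : 1 ≤ n) (hk : 1 ≤ k) (hL₀ : 1 ≤ L₀) (hdvd : s ∣ L₀)
    (K Ls E : Type*) [Field K] [Fintype K] [Field Ls] [Fintype Ls] [Field E] [Fintype E]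
    [Algebra K Ls] [Algebra Ls E] [Algebra K E] [IsScalarTower K Ls E]
    (hKcard : Fintype.card K = q) (hLscard : Fintype.card Ls = q ^ s)
    (hEcard : Fintype.card E = q ^ L₀)
    (b : Module.Basis (Fin s) K Ls) (α : Fin k → E) (A : Fin k → Matrix (Fin n) (Fin n) Ls) :
    (∑ i, α i • (phibar b (A i)).map (algebraMap K E)).rank =
      ∑ j : Fin s,
        (∑ i, α i • ((A i).map fun x => x ^ q ^ (j : ℕ)).map (algebraMap Ls E)).rank := by
  classical
  obtain ⟨p, e, hpp, he, hpe⟩ := hq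
  have hp : p.Prime := Nat.prime_iff.mpr hpp
  haveI : Fact p.Prime := ⟨hp⟩
  have hq2 : 2 ≤ q := by
    calc 2 ≤ p := hp.two_le
    _ ≤ p ^ e := Nat.le_self_pow (by omega) p
    _ = q := hpe
  have hcharE : CharP E p := by
    obtain ⟨n', hp', hcard⟩ := FiniteField.card E (ringChar E)
    have h1 : p ∣ Fintype.card E := by
      rw [hEcard, ← hpe, ← pow_mul]
      exact dvd_pow_self p (by positivity)
    rw [hcard] at h1
    have : p = ringChar E := (Nat.prime_dvd_prime_iff_eq hp hp').mp (hp.dvd_of_dvd_pow h1)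
    rw [this]; exact ringChar.charP E
  haveI := hcharE
  set ι := algebraMap Ls E with hι
  set ψ : Fin s → (Ls →+* E) := fun mm => (iterateFrobenius E p (e * mm)).comp ι with hψdef
  have hψ : ∀ (mm : Fin s) (x : Ls), ψ mm x = (ι x) ^ q ^ (mm : ℕ) := by
    intro mm x
    simp only [hψdef, RingHom.comp_apply, iterateFrobenius_def]
    rw [← hpe, ← pow_mul]
  -- fixed points of Frobenius powers
  have hfixE : ∀ (x : E), x ^ q = x → ∀ mm : ℕ, x ^ q ^ mm = x := by
    intro x hx mm
    induction mm with
    | zero => simp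
    | succ t iht => rw [pow_succ, pow_mul, iht, hx]
  have hfixK : ∀ (a : K) (mm : ℕ), (algebraMap K E a) ^ q ^ mm = algebraMap K E a := by
    intro a mm
    apply hfixE
    rw [← map_pow, ← hKcard, FiniteField.pow_card]
  have hψK : ∀ (mm : Fin s) (a : K), ψ mm (algebraMap K Ls a) = algebraMap K E a := by
    intro mm a
    rw [hψ, hι, ← IsScalarTower.algebraMap_apply, hfixK]
  -- basis representation
  have hrepr : ∀ (β : Ls) (j : Fin s), ∑ t, phi b β t j • b t = β * b j := by
    intro β j
    simpa [phi, LinearMap.toMatrix_apply, LinearMap.mulLeft_apply] using b.sum_repr (β * b j)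
  -- the key scalar identity
  have hkey : ∀ (mm : Fin s) (β : Ls) (j : Fin s),
      ∑ t, algebraMap K E (phi b β t j) * ψ mm (b t) = ψ mm β * ψ mm (b j) := by
    intro mm β j
    have h1 := congrArg (ψ mm) (hrepr β j)
    rw [_root_.map_mul, map_sum] at h1
    rw [← h1]
    refine Finset.sum_congr rfl fun t _ => ?_
    rw [Algebra.smul_def, _root_.map_mul, hψK]
  -- distinctness of the ψ's
  have main : ∀ m1 m2 : Fin s, (m1 : ℕ) ≤ (m2 : ℕ) → (∀ x, ψ m1 x = ψ m2 x) → m1 = m2 := by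
    intro m1 m2 h12 hf
    by_contra hne
    set d := (m2 : ℕ) - (m1 : ℕ) with hd
    have hd1 : 1 ≤ d := by
      have : (m1 : ℕ) ≠ (m2 : ℕ) := fun hc => hne (Fin.ext hc)
      omega
    have hds : d < s := lt_of_le_of_lt (Nat.sub_le _ _) m2.isLt
    have hinj1 : Function.Injective (fun z : E => z ^ q ^ (m1 : ℕ)) := by
      have hfe : (fun z : E => z ^ q ^ (m1 : ℕ)) = ⇑(iterateFrobenius E p (e * (m1 : ℕ))) := by
        funext z; rw [iterateFrobenius_def, ← hpe, ← pow_mul]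
      rw [hfe]; exact (iterateFrobenius E p (e * (m1 : ℕ))).injective
    have hroot : ∀ x : Ls, x ^ q ^ d = x := by
      intro x
      have h1 : (ι x) ^ q ^ (m1 : ℕ) = ((ι x) ^ q ^ d) ^ q ^ (m1 : ℕ) := by
        have h2 := hf x
        rw [hψ, hψ] at h2
        rw [h2, ← pow_mul, ← pow_add]
        congr 2
        omega
      have h3 : ι x = (ι x) ^ q ^ d := hinj1 h1
      have h4 : ι x = ι (x ^ q ^ d) := by rw [map_pow]; exact h3
      exact (ι.injective h4).symm
    obtain ⟨g, hg⟩ := IsCyclic.exists_generator (α := Lsˣ)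
    have horder : orderOf g = q ^ s - 1 := by
      rw [orderOf_eq_card_of_forall_mem_zpowers hg, Nat.card_units, Nat.card_eq_fintype_card,
        hLscard]
    have hgp : g ^ q ^ d = g ^ 1 := by
      ext
      rw [Units.val_pow_eq_pow_val, pow_one]
      exact hroot g
    have hmod : q ^ d ≡ 1 [MOD q ^ s - 1] := by
      rw [← horder]; exact pow_eq_pow_iff_modEq.mp hgp
    have hdvd2 : (q ^ s - 1) ∣ (q ^ d - 1) :=
      (Nat.modEq_iff_dvd' (Nat.one_le_two_pow.trans (Nat.pow_le_pow_left hq2 d))).mp hmod.symm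
    have hlt : q ^ d < q ^ s := Nat.pow_lt_pow_right (by omega) hds
    have hpos : 0 < q ^ d - 1 := by
      have h5 : 2 ≤ q ^ d := le_trans hq2 (Nat.le_self_pow (by omega) q)
      omega
    have := Nat.le_of_dvd hpos hdvd2
    omega
  have hdist : Function.Injective fun mm : Fin s => (ψ mm : Ls →* E) := by
    intro m1 m2 h
    have hfun : ∀ x : Ls, ψ m1 x = ψ m2 x := fun x => DFunLike.congr_fun h x
    rcases le_total (m1 : ℕ) (m2 : ℕ) with hle | hle
    · exact main m1 m2 hle hfun
    · exact (main m2 m1 hle (fun x => (hfun x).symm)).symm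
  -- linear independence of the ψ's over E
  have liψ : LinearIndependent E (fun mm : Fin s => ⇑(ψ mm)) := by
    have h0 := linearIndependent_monoidHom Ls E
    exact h0.comp (fun mm : Fin s => (ψ mm : Ls →* E)) hdist
  -- the Moore-type matrix P
  set P : Matrix (Fin s) (Fin s) E := Matrix.of (fun mm j => ψ mm (b j)) with hPdef
  have hPunit : IsUnit P := by
    rw [← Matrix.linearIndependent_rows_iff_isUnit]
    rw [Fintype.linearIndependent_iff]
    intro g hg
    rw [Fintype.linearIndependent_iff] at liψ
    apply liψ g
    -- need : ∑ mm, g mm • ⇑(ψ mm) = 0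
    -- define a K-linear map and use basis ext
    have hT : ∀ j : Fin s, ∑ mm, g mm * ψ mm (b j) = 0 := by
      intro j
      have := congrFun hg j
      simpa [Finset.sum_apply, hPdef] using this
    let T : Ls →ₗ[K] E :=
      { toFun := fun x => ∑ mm, g mm * ψ mm x
        map_add' := by
          intro x y
          simp [map_add, mul_add, Finset.sum_add_distrib]
        map_smul' := by
          intro a x
          simp only [RingHom.id_apply]
          rw [Algebra.smul_def (A := E), Finset.mul_sum]
          refine Finset.sum_congr rfl fun mm _ => ?_
          rw [Algebra.smul_def, _root_.map_mul, hψK]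
          ring }
    have hT0 : T = 0 := by
      apply b.ext
      intro j
      simpa [T] using hT j
    funext x
    have := LinearMap.congr_fun hT0 x
    simpa [T, Finset.sum_apply, Pi.smul_apply, smul_eq_mul] using this
  -- the big matrices
  set S : Fin s → Matrix (Fin n) (Fin n) E :=
    fun j => ∑ i, α i • ((A i).map fun x => x ^ q ^ (j : ℕ)).map ι with hSdef
  set Mtot : Matrix (Fin n × Fin s) (Fin n × Fin s) E :=
    ∑ i, α i • (phibar b (A i)).map (algebraMap K E) with hMdef
  set Q : Matrix (Fin n × Fin s) (Fin n × Fin s) E :=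
    (1 : Matrix (Fin n) (Fin n) E) ⊗ₖ P with hQdef
  have hQd : IsUnit Q.det := by
    rw [hQdef, Matrix.det_kronecker, Matrix.det_one, one_pow, one_mul]
    exact ((Matrix.isUnit_iff_isUnit_det P).mp hPunit).pow _
  have hcomm : Q * Mtot = Matrix.blockDiagonal S * Q := by
    ext ⟨a, mm⟩ ⟨c, j⟩
    rw [Matrix.mul_apply, Matrix.mul_apply]
    have hQ : ∀ (e' : Fin n) (t : Fin s), Q (a, mm) (e', t) = (if a = e' then P mm t else 0) := by
      intro e' t
      simp [hQdef, Matrix.kroneckerMap_apply, Matrix.one_apply, ite_mul]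
    have hQ2 : ∀ (e' : Fin n) (t : Fin s), Q (e', t) (c, j) = (if e' = c then P t j else 0) := by
      intro e' t
      simp [hQdef, Matrix.kroneckerMap_apply, Matrix.one_apply, ite_mul]
    have hM : ∀ (e' : Fin n) (t : Fin s),
        Mtot (e', t) (c, j) = ∑ i, α i * algebraMap K E (phi b ((A i) e' c) t j) := by
      intro e' t
      simp [hMdef, Matrix.sum_apply, Matrix.smul_apply, Matrix.map_apply, phibar, smul_eq_mul]
    have hN : ∀ (e' : Fin n) (t : Fin s),
        Matrix.blockDiagonal S (a, mm) (e', t) = if mm = t then S mm a e' else 0 := by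
      intro e' t
      simp [Matrix.blockDiagonal_apply]
    calc ∑ x : Fin n × Fin s, Q (a, mm) x * Mtot x (c, j)
        = ∑ e', ∑ t, (if a = e' then P mm t else 0)
            * (∑ i, α i * algebraMap K E (phi b ((A i) e' c) t j)) := by
          rw [Fintype.sum_prod_type]
          exact Finset.sum_congr rfl fun e' _ => Finset.sum_congr rfl fun t _ => by
            rw [hQ, hM]
      _ = ∑ t, P mm t * (∑ i, α i * algebraMap K E (phi b ((A i) a c) t j)) := by
          rw [Finset.sum_comm]
          simp [ite_mul, Finset.sum_ite_eq]
      _ = ∑ i, α i * (ψ mm ((A i) a c) * ψ mm (b j)) := by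
          simp_rw [Finset.mul_sum]
          rw [Finset.sum_comm]
          refine Finset.sum_congr rfl fun i _ => ?_
          rw [← hkey mm ((A i) a c) j, Finset.mul_sum]
          refine Finset.sum_congr rfl fun t _ => ?_
          have hPt : P mm t = ψ mm (b t) := rfl
          rw [hPt]; ring
      _ = S mm a c * P mm j := by
          have hS : S mm a c = ∑ i, α i * ψ mm ((A i) a c) := by
            simp only [hSdef, Matrix.sum_apply, Matrix.smul_apply, Matrix.map_apply,
              smul_eq_mul]
            exact Finset.sum_congr rfl fun i _ => by rw [hψ, map_pow]
          rw [hS, Finset.sum_mul]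
          refine Finset.sum_congr rfl fun i _ => ?_
          have : P mm j = ψ mm (b j) := rfl
          rw [this]; ring
      _ = ∑ x : Fin n × Fin s, Matrix.blockDiagonal S (a, mm) x * Q x (c, j) := by
          rw [Fintype.sum_prod_type]
          rw [show ∑ e', ∑ t, Matrix.blockDiagonal S (a, mm) (e', t) * Q (e', t) (c, j)
              = ∑ e', ∑ t, (if mm = t then S mm a e' else 0) * (if e' = c then P t j else 0)
            from Finset.sum_congr rfl fun e' _ => Finset.sum_congr rfl fun t _ => by
              rw [hN, hQ2]]
          simp [ite_mul, mul_ite, Finset.sum_ite_eq, Finset.sum_ite_eq']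
  calc Mtot.rank
      = (Q * Mtot).rank := (Matrix.rank_mul_eq_right_of_isUnit_det Q Mtot hQd).symm
    _ = (Matrix.blockDiagonal S * Q).rank := by rw [hcomm]
    _ = (Matrix.blockDiagonal S).rank :=
        Matrix.rank_mul_eq_left_of_isUnit_det Q (Matrix.blockDiagonal S) hQd
    _ = ∑ j, (S j).rank := rank_blockDiagonalAux S
end

section
/- Let L be a positive multiple of s, ι : F_{q^s} ↪ F_{q^L} the field embedding, and m ≥ 1. Suppose α_1, …, α_k ∈ F_{q^L} satisfy α_i^{q^m} = α_i for all i, and let A_1, …, A_k ∈ M_n(F_{q^s}). Then for every j ∈ {0, …, s−1}: rank( Σ_{i=1}^k α_i · ι(A_i^{σ^j}) ) = rank( Σ_{i=1}^k α_i^{q^{j'}} · ι(A_i) ), where j' is the unique integer with 0 ≤ j' < m and j' ≡ −j (mod m), and ranks are taken over F_{q^L}. Consequently rank( Σ_i α_i · ι(φ̄(A_i)) ) = Σ_{j=0}^{s−1} rank( Σ_i α_i^{q^{(m−j) mod m}} · ι(A_i) ). -/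
open Matrix Polynomial

section AuxRank

lemma aux_finrank_eq_finrank_of_card {F : Type*} [Field F] [Fintype F]
    {V W : Type*} [AddCommGroup V] [Module F V] [AddCommGroup W] [Module F W]
    [Finite V] [Finite W] (h : Nat.card V = Nat.card W) :
    Module.finrank F V = Module.finrank F W := by
  haveI : Fintype V := Fintype.ofFinite V
  haveI : Fintype W := Fintype.ofFinite W
  have h1 := Module.card_eq_pow_finrank (K := F) (V := V)
  have h2 := Module.card_eq_pow_finrank (K := F) (V := W)
  rw [Nat.card_eq_fintype_card, Nat.card_eq_fintype_card, h1, h2] at h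
  exact Nat.pow_right_injective Fintype.one_lt_card h

lemma aux_card_range_mulVecLin {F : Type*} [Field F] [Fintype F] {m n : Type*}
    [Fintype m] [Fintype n] (M : Matrix m n F) :
    Nat.card (LinearMap.range M.mulVecLin) = Fintype.card F ^ M.rank := by
  haveI : Fintype ↥(LinearMap.range M.mulVecLin) := Fintype.ofFinite _
  rw [Nat.card_eq_fintype_card, Module.card_eq_pow_finrank (K := F)]
  rfl

lemma aux_rank_map_bijective {F : Type*} [Field F] [Fintype F] {m n : Type*}
    [Fintype m] [Fintype n] (f : F →+* F) (hf : Function.Bijective f)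
    (M : Matrix m n F) : (M.map f).rank = M.rank := by
  have key : ∀ v : n → F, (M.map f) *ᵥ (f ∘ v) = f ∘ (M *ᵥ v) := by
    intro v; funext i
    simp [Matrix.mulVec, dotProduct, map_sum, Function.comp]
  have hrange : (LinearMap.range (M.map f).mulVecLin : Set (m → F)) =
      (fun v => f ∘ v) '' (LinearMap.range M.mulVecLin : Set (m → F)) := by
    ext x
    simp only [SetLike.mem_coe, LinearMap.mem_range, Matrix.mulVecLin_apply, Set.mem_image]
    constructor
    · rintro ⟨v, rfl⟩
      obtain ⟨u, hu⟩ : ∃ u, f ∘ u = v :=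
        ⟨(Equiv.ofBijective f hf).symm ∘ v, by
          funext i; exact Function.rightInverse_surjInv hf.2 (v i)⟩
      exact ⟨M *ᵥ u, ⟨u, rfl⟩, by rw [← key, hu]⟩
    · rintro ⟨y, ⟨v, rfl⟩, rfl⟩; exact ⟨f ∘ v, key v⟩
  have hinj : Function.Injective (fun v : m → F => f ∘ v) := fun a b hab =>
    funext fun i => hf.1 (congrFun hab i)
  have hcard : Nat.card (LinearMap.range (M.map f).mulVecLin) =
      Nat.card (LinearMap.range M.mulVecLin) := by
    have h2 := Nat.card_image_of_injective hinj (LinearMap.range M.mulVecLin : Set (m → F))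
    rw [← hrange] at h2
    simpa using h2
  exact aux_finrank_eq_finrank_of_card hcard

lemma aux_rank_blockDiagonal {F : Type*} [Field F] [Fintype F] {s n : ℕ}
    (C : Fin s → Matrix (Fin n) (Fin n) F) :
    (Matrix.blockDiagonal C).rank = ∑ j, (C j).rank := by
  classical
  have hmv : ∀ (v : Fin n × Fin s → F) (p : Fin n) (u : Fin s),
      (Matrix.blockDiagonal C *ᵥ v) (p, u) = ((C u) *ᵥ (fun t => v (t, u))) p := by
    intro v p u
    simp [Matrix.mulVec, dotProduct, Fintype.sum_prod_type,
      Matrix.blockDiagonal_apply, ite_mul, mul_ite, Finset.sum_comm (γ := Fin s)]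
  set S := LinearMap.range (Matrix.blockDiagonal C).mulVecLin with hS
  set Sj := fun j : Fin s => LinearMap.range (C j).mulVecLin with hSj
  have eqv : ↥S ≃ (∀ j : Fin s, ↥(Sj j)) :=
    { toFun := fun x => fun j => ⟨fun t => x.1 (t, j), by
        obtain ⟨v, hv⟩ := x.2
        exact ⟨fun t => v (t, j), by
          funext p
          rw [Matrix.mulVecLin_apply, ← hv, Matrix.mulVecLin_apply, hmv]⟩⟩
      invFun := fun y => ⟨fun tu => (y tu.2).1 tu.1, by
        have h2 := fun j => (y j).2
        choose w hw using h2
        refine ⟨fun tu => w tu.2 tu.1, ?_⟩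
        funext pu
        obtain ⟨p, u⟩ := pu
        rw [Matrix.mulVecLin_apply, hmv, ← hw u, Matrix.mulVecLin_apply]⟩
      left_inv := fun x => Subtype.ext (funext fun tu => rfl)
      right_inv := fun y => funext fun j => Subtype.ext (funext fun t => rfl) }
  have hcard : Nat.card ↥S = ∏ j, Nat.card ↥(Sj j) := by
    rw [Nat.card_congr eqv, Nat.card_pi]
  rw [hS] at hcard
  rw [aux_card_range_mulVecLin] at hcard
  have hcard2 : ∀ j, Nat.card ↥(Sj j) = Fintype.card F ^ (C j).rank := fun j =>
    aux_card_range_mulVecLin (C j)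
  simp only [hcard2] at hcard
  rw [Finset.prod_pow_eq_pow_sum] at hcard
  exact Nat.pow_right_injective Fintype.one_lt_card hcard

lemma aux_pow_pow_mod {E : Type*} [Monoid E] (β : E) (q m : ℕ) (hβ : β ^ q ^ m = β) (t : ℕ) :
    β ^ q ^ t = β ^ q ^ (t % m) := by
  have h1 : ∀ u : ℕ, β ^ (q ^ m) ^ u = β := by
    intro u; induction u with
    | zero => simp
    | succ u ih => rw [pow_succ, pow_mul, ih, hβ]
  have h2 : q ^ t = (q ^ m) ^ (t / m) * q ^ (t % m) := by
    rw [← pow_mul, ← pow_add]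
    congr 1
    exact (Nat.div_add_mod t m).symm ▸ rfl
  rw [h2, pow_mul, h1]

end AuxRank

/-- Let `L₀` be a positive multiple of `s`, `ι : F_{q^s} ↪ F_{q^{L₀}}`
the field embedding (`E = F_{q^{L₀}}`), and `m ≥ 1`.  Suppose `α₁, …, α_k ∈ F_{q^{L₀}}`
satisfy `αᵢ^{qᵐ} = αᵢ`, and let `A₁, …, A_k ∈ Mₙ(F_{q^s})`.  Then for every
`j ∈ {0, …, s−1}` and the unique `0 ≤ j' < m` with `j' ≡ −j (mod m)`,
`rank(Σᵢ αᵢ·ι(Aᵢ^{σʲ})) = rank(Σᵢ αᵢ^{q^{j'}}·ι(Aᵢ))`; consequently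
`rank(Σᵢ αᵢ·ι(φ̄(Aᵢ))) = Σ_{j=0}^{s−1} rank(Σᵢ αᵢ^{q^{(m−j) mod m}}·ι(Aᵢ))`,
ranks taken over `F_{q^{L₀}}`. -/
theorem rank_frobenius_shift (q s n k L₀ m : ℕ) (hq : IsPrimePow q)
    (hs : 1 ≤ s) (hn : 1 ≤ n) (hk : 1 ≤ k) (hL₀ : 1 ≤ L₀) (hdvd : s ∣ L₀) (hm : 1 ≤ m)
    (K Ls E : Type*) [Field K] [Fintype K] [Field Ls] [Fintype Ls] [Field E] [Fintype E]
    [Algebra K Ls] [Algebra Ls E] [Algebra K E] [IsScalarTower K Ls E]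
    (hKcard : Fintype.card K = q) (hLscard : Fintype.card Ls = q ^ s)
    (hEcard : Fintype.card E = q ^ L₀)
    (b : Module.Basis (Fin s) K Ls) (α : Fin k → E) (hα : ∀ i, α i ^ q ^ m = α i)
    (A : Fin k → Matrix (Fin n) (Fin n) Ls) :
    (∀ (j : Fin s) (j' : ℕ), j' < m → (j' + (j : ℕ)) % m = 0 →
        (∑ i, α i • ((A i).map fun x => x ^ q ^ (j : ℕ)).map (algebraMap Ls E)).rank =
          (∑ i, (α i ^ q ^ j') • (A i).map (algebraMap Ls E)).rank) ∧
      (∑ i, α i • (phibar b (A i)).map (algebraMap K E)).rank =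
        ∑ j : Fin s,
          (∑ i, (α i ^ q ^ ((m - (j : ℕ) % m) % m)) • (A i).map (algebraMap Ls E)).rank := by
  classical
  obtain ⟨p, e, hpp, he, hpe⟩ := hq
  have hp : p.Prime := hpp.nat_prime
  have hq2 : 2 ≤ q := by
    rw [← hpe]
    calc 2 ≤ p := hp.two_le
    _ = p ^ 1 := (pow_one p).symm
    _ ≤ p ^ e := Nat.pow_le_pow_right hp.pos he
  -- characteristic
  haveI hcharE : CharP E p := by
    have hchar := CharP.char_is_prime E (ringChar E)
    obtain ⟨nn, -, hcard⟩ := FiniteField.card E (ringChar E)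
    rw [hEcard, ← hpe, ← pow_mul] at hcard
    have hdvd' : ringChar E ∣ p ^ (e * L₀) := by
      rw [hcard]; exact dvd_pow_self _ nn.pos.ne'
    have heq : ringChar E = p :=
      (Nat.prime_dvd_prime_iff_eq hchar hp).mp (Nat.Prime.dvd_of_dvd_pow hchar hdvd')
    rw [← heq]; exact ringChar.charP E
  haveI : Fact p.Prime := ⟨hp⟩
  -- the Frobenius power maps
  set frob : ℕ → (E →+* E) := fun t => iterateFrobenius E p (e * t) with hfrobdef
  have hfrob : ∀ (t : ℕ) (x : E), frob t x = x ^ q ^ t := by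
    intro t x
    rw [hfrobdef]
    show x ^ p ^ (e * t) = x ^ q ^ t
    rw [← hpe, ← pow_mul]
  have hfrobbij : ∀ t : ℕ, Function.Bijective (frob t) := fun t =>
    (Finite.injective_iff_bijective).mp (frob t).injective
  set ι : Ls →+* E := algebraMap Ls E with hιdef
  set ιK : K →+* E := algebraMap K E with hιKdef
  -- pow facts
  have hF2 : ∀ (c : K) (t : ℕ), (ιK c) ^ q ^ t = ιK c := by
    intro c t
    rw [← map_pow]
    congr 1
    rw [← hKcard]
    exact FiniteField.pow_card_pow t c
  have hF1 : ∀ (x : Ls) (t : ℕ), x ^ (q ^ s) ^ t = x := by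
    intro x t
    rw [← hLscard]
    exact FiniteField.pow_card_pow t x
  -- Part 1
  have key1 : ∀ (j : Fin s) (j' : ℕ), j' < m → (j' + (j : ℕ)) % m = 0 →
      (∑ i, α i • ((A i).map fun x => x ^ q ^ (j : ℕ)).map ι).rank =
        (∑ i, (α i ^ q ^ j') • (A i).map ι).rank := by
    intro j j' hj' hjj'
    have hsm : (j : ℕ) < s * m := lt_of_lt_of_le j.isLt (Nat.le_mul_of_pos_right s hm)
    set N := s * m - (j : ℕ) with hNdef
    have hNj : (j : ℕ) + N = s * m := by omega
    have hNmod : N % m = j' := by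
      have h1 : (N + (j : ℕ)) % m = 0 := by
        rw [Nat.add_comm, hNj, Nat.mul_mod_left]
      have h2 : N ≡ j' [MOD m] := by
        have : N + (j : ℕ) ≡ j' + (j : ℕ) [MOD m] := by
          unfold Nat.ModEq; rw [h1, hjj']
        exact Nat.ModEq.add_right_cancel' _ this
      rw [Nat.ModEq] at h2
      rw [h2, Nat.mod_eq_of_lt hj']
    have hmap : ((∑ i, α i • ((A i).map fun x => x ^ q ^ (j : ℕ)).map ι).map (frob N)) =
        ∑ i, (α i ^ q ^ j') • (A i).map ι := by
      ext pp rr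
      show frob N ((∑ i, α i • ((A i).map fun x => x ^ q ^ (j : ℕ)).map ι) pp rr) = _
      rw [Matrix.sum_apply, map_sum, Matrix.sum_apply]
      refine Finset.sum_congr rfl fun i _ => ?_
      simp only [Matrix.smul_apply, Matrix.map_apply, smul_eq_mul]
      rw [hfrob, mul_pow]
      congr 1
      · rw [aux_pow_pow_mod (α i) q m (hα i) N, hNmod]
      · rw [← RingHom.map_pow, ← pow_mul, ← pow_add, hNj, pow_mul, hF1]
    calc (∑ i, α i • ((A i).map fun x => x ^ q ^ (j : ℕ)).map ι).rank
        = ((∑ i, α i • ((A i).map fun x => x ^ q ^ (j : ℕ)).map ι).map (frob N)).rank :=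
          (aux_rank_map_bijective (frob N) (hfrobbij N) _).symm
      _ = _ := by rw [hmap]
  refine ⟨key1, ?_⟩
  -- Part 2
  set V : Matrix (Fin s) (Fin s) E := fun u w => ι (b w) ^ q ^ (u : ℕ) with hVdef
  -- V is invertible
  have hVdet : IsUnit V.det := by
    rw [isUnit_iff_ne_zero]
    rw [← Matrix.det_transpose]
    rw [Ne, ← Matrix.exists_mulVec_eq_zero_iff]
    rintro ⟨c, hc0, hc⟩
    apply hc0
    have hcw : ∀ w : Fin s, ∑ u, c u * ι (b w) ^ q ^ (u : ℕ) = 0 := by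
      intro w
      have := congrFun hc w
      rw [Matrix.mulVec, dotProduct] at this
      simpa [Matrix.transpose_apply, mul_comm] using this
    set P : Polynomial E := ∑ u : Fin s, Polynomial.C (c u) * Polynomial.X ^ (q ^ (u : ℕ))
      with hPdef
    have heval : ∀ x : Ls, P.eval (ι x) = 0 := by
      intro x
      have hx : ι x = ∑ w, ιK (b.repr x w) * ι (b w) := by
        conv_lhs => rw [← b.sum_repr x]
        rw [map_sum]
        refine Finset.sum_congr rfl fun w _ => ?_
        rw [Algebra.smul_def, RingHom.map_mul, ← IsScalarTower.algebraMap_apply]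
      have hxpow : ∀ u : ℕ, (ι x) ^ q ^ u = ∑ w, ιK (b.repr x w) * ι (b w) ^ q ^ u := by
        intro u
        rw [← hfrob, hx, map_sum]
        refine Finset.sum_congr rfl fun w _ => ?_
        rw [RingHom.map_mul, hfrob, hfrob, hF2]
      rw [hPdef]
      rw [Polynomial.eval_finset_sum]
      simp only [Polynomial.eval_mul, Polynomial.eval_C, Polynomial.eval_pow, Polynomial.eval_X]
      calc ∑ u : Fin s, c u * (ι x) ^ q ^ (u : ℕ)
          = ∑ u : Fin s, ∑ w, ιK (b.repr x w) * (c u * ι (b w) ^ q ^ (u : ℕ)) := by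
            refine Finset.sum_congr rfl fun u _ => ?_
            rw [hxpow, Finset.mul_sum]
            refine Finset.sum_congr rfl fun w _ => ?_
            ring
        _ = ∑ w, ιK (b.repr x w) * ∑ u : Fin s, c u * ι (b w) ^ q ^ (u : ℕ) := by
            rw [Finset.sum_comm]
            refine Finset.sum_congr rfl fun w _ => ?_
            rw [Finset.mul_sum]
        _ = 0 := by
            simp [hcw]
    have hPdeg : P.natDegree < Fintype.card Ls := by
      rw [hLscard]
      have h1 : P.natDegree ≤ q ^ (s - 1) := by
        apply Polynomial.natDegree_sum_le_of_forall_le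
        intro u _
        refine le_trans (Polynomial.natDegree_C_mul_le _ _) ?_
        rw [Polynomial.natDegree_X_pow]
        exact Nat.pow_le_pow_right (by omega) (by omega)
      exact lt_of_le_of_lt h1 (Nat.pow_lt_pow_right hq2 (by omega))
    have hP0 : P = 0 := by
      refine Polynomial.eq_zero_of_natDegree_lt_card_of_eval_eq_zero P
        (f := fun x : Ls => ι x) (fun a b hab => (algebraMap Ls E).injective hab)
        heval hPdeg
    funext u
    have hcoeff := congrArg (fun Q : Polynomial E => Q.coeff (q ^ (u : ℕ))) hP0
    simp only [hPdef, Polynomial.finset_sum_coeff, Polynomial.coeff_C_mul,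
      Polynomial.coeff_X_pow, Polynomial.coeff_zero] at hcoeff
    rw [Finset.sum_eq_single u] at hcoeff
    · simpa using hcoeff
    · intro u' _ hu'
      have : ¬ (q ^ (u : ℕ) = q ^ (u' : ℕ)) := by
        intro hcon
        exact hu' (Fin.ext (Nat.pow_right_injective hq2 hcon).symm)
      simp [this]
    · intro hu; exact absurd (Finset.mem_univ u) hu
  -- the conjugating matrix W = 1 ⊗ V
  set W : Matrix (Fin n × Fin s) (Fin n × Fin s) E :=
    Matrix.kroneckerMap (· * ·) (1 : Matrix (Fin n) (Fin n) E) V with hWdef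
  have hWdet : IsUnit W.det := by
    rw [hWdef]
    rw [Matrix.det_kronecker]
    simp only [Matrix.det_one, one_pow, one_mul]
    exact hVdet.pow _
  -- key scalar identity
  have hkey : ∀ (β : Ls) (u l : Fin s),
      ∑ w, ιK (phi b β w l) * ι (b w) ^ q ^ (u : ℕ) = ι β ^ q ^ (u : ℕ) * ι (b l) ^ q ^ (u : ℕ) := by
    intro β u l
    have h0 : ∑ w, ιK (phi b β w l) * ι (b w) = ι β * ι (b l) := by
      have hrepr : ∑ w, phi b β w l • b w = β * b l := by
        have h1 : ∀ w, phi b β w l = b.repr (β * b l) w := by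
          intro w
          rw [phi, LinearMap.toMatrix_apply, LinearMap.mulLeft_apply]
        simp only [h1]
        exact b.sum_repr (β * b l)
      calc ∑ w, ιK (phi b β w l) * ι (b w) = ι (∑ w, phi b β w l • b w) := by
            rw [map_sum]
            refine Finset.sum_congr rfl fun w _ => ?_
            rw [Algebra.smul_def, RingHom.map_mul, ← IsScalarTower.algebraMap_apply]
        _ = ι (β * b l) := by rw [hrepr]
        _ = ι β * ι (b l) := RingHom.map_mul ι _ _
    have h1 : ∀ w : Fin s, (frob (u : ℕ)) (ιK (phi b β w l) * ι (b w)) =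
        ιK (phi b β w l) * ι (b w) ^ q ^ (u : ℕ) := fun w => by
      rw [hfrob, mul_pow, hF2]
    have h2 := congrArg (frob (u : ℕ)) h0
    rw [map_sum] at h2
    simp only [h1] at h2
    rw [h2, hfrob, mul_pow]
  -- the block diagonal matrix
  set Cf : Fin s → Matrix (Fin n) (Fin n) E :=
    fun j => ∑ i, α i • ((A i).map fun x => x ^ q ^ (j : ℕ)).map ι with hCfdef
  set Mbig : Matrix (Fin n × Fin s) (Fin n × Fin s) E :=
    ∑ i, α i • (phibar b (A i)).map ιK with hMbigdef
  have hcomm : W * Mbig = Matrix.blockDiagonal Cf * W := by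
    ext ⟨pp, u⟩ ⟨rr, l⟩
    rw [Matrix.mul_apply, Matrix.mul_apply]
    rw [Fintype.sum_prod_type, Fintype.sum_prod_type]
    have hL : ∀ t : Fin n, ∀ w : Fin s, W (pp, u) (t, w) * Mbig (t, w) (rr, l) =
        (if pp = t then (1 : E) else 0) * (ι (b w) ^ q ^ (u : ℕ) *
          ∑ i, α i * ιK (phi b (A i t rr) w l)) := by
      intro t w
      rw [hWdef, hMbigdef, Matrix.kroneckerMap_apply]
      simp only [Matrix.kroneckerMap_apply, Matrix.one_apply, Matrix.sum_apply,
        Matrix.smul_apply, Matrix.map_apply, smul_eq_mul, hVdef]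
      simp only [phibar]
      rw [mul_assoc]
    have hR : ∀ t : Fin n, ∀ w : Fin s, Matrix.blockDiagonal Cf (pp, u) (t, w) * W (t, w) (rr, l) =
        (if t = rr then (1 : E) else 0) * ((if u = w then (1:E) else 0) *
          ((∑ i, α i * ι ((A i) pp t ^ q ^ (u : ℕ))) * ι (b l) ^ q ^ (w : ℕ))) := by
      intro t w
      rw [hWdef, hCfdef, Matrix.kroneckerMap_apply]
      simp only [Matrix.kroneckerMap_apply, Matrix.one_apply, Matrix.blockDiagonal_apply,
        Matrix.sum_apply, Matrix.smul_apply, Matrix.map_apply, smul_eq_mul, hVdef]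
      by_cases htr : t = rr <;> by_cases huw : u = w <;> simp [htr, huw] <;> ring
    simp only [hL, hR]
    simp only [ite_mul, one_mul, zero_mul, mul_ite, mul_zero, Finset.sum_ite_irrel,
      Finset.sum_const_zero, Finset.sum_ite_eq, Finset.sum_ite_eq',
      Finset.mem_univ, if_true]
    -- now sums over remaining indices
    calc ∑ w, ι (b w) ^ q ^ (u : ℕ) * ∑ i, α i * ιK (phi b (A i pp rr) w l)
        = ∑ w, ∑ i, α i * (ιK (phi b (A i pp rr) w l) * ι (b w) ^ q ^ (u : ℕ)) := by
          refine Finset.sum_congr rfl fun w _ => ?_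
          rw [Finset.mul_sum]
          refine Finset.sum_congr rfl fun i _ => by ring
      _ = ∑ i, ∑ w, α i * (ιK (phi b (A i pp rr) w l) * ι (b w) ^ q ^ (u : ℕ)) :=
          Finset.sum_comm
      _ = ∑ i, α i * (∑ w, ιK (phi b (A i pp rr) w l) * ι (b w) ^ q ^ (u : ℕ)) := by
          refine Finset.sum_congr rfl fun i _ => ?_
          rw [Finset.mul_sum]
      _ = ∑ i, α i * (ι (A i pp rr) ^ q ^ (u : ℕ) * ι (b l) ^ q ^ (u : ℕ)) := by
          refine Finset.sum_congr rfl fun i _ => ?_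
          rw [hkey]
      _ = (∑ i, α i * ι ((A i) pp rr ^ q ^ (u : ℕ))) * ι (b l) ^ q ^ (u : ℕ) := by
          rw [Finset.sum_mul]
          refine Finset.sum_congr rfl fun i _ => ?_
          rw [RingHom.map_pow]
          ring
  -- rank chain
  calc Mbig.rank = (W * Mbig).rank :=
        (Matrix.rank_mul_eq_right_of_isUnit_det W Mbig hWdet).symm
    _ = (Matrix.blockDiagonal Cf * W).rank := by rw [hcomm]
    _ = (Matrix.blockDiagonal Cf).rank :=
        Matrix.rank_mul_eq_left_of_isUnit_det W (Matrix.blockDiagonal Cf) hWdet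
    _ = ∑ j : Fin s, (Cf j).rank := aux_rank_blockDiagonal Cf
    _ = ∑ j : Fin s,
          (∑ i, (α i ^ q ^ ((m - (j : ℕ) % m) % m)) • (A i).map (algebraMap Ls E)).rank := by
        refine Finset.sum_congr rfl fun j _ => ?_
        refine key1 j ((m - (j : ℕ) % m) % m) (Nat.mod_lt _ hm) ?_
        conv_lhs => rw [Nat.add_mod, Nat.mod_mod_of_dvd _ dvd_rfl]
        have h1 : (j : ℕ) % m < m := Nat.mod_lt _ hm
        have h2 : (m - (j : ℕ) % m) + (j : ℕ) % m = m := Nat.sub_add_cancel h1.le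
        have h4 : (m - (j : ℕ) % m) + (j : ℕ) ≡ (m - (j : ℕ) % m) + (j : ℕ) % m [MOD m] :=
          Nat.ModEq.add_left _ (Nat.mod_modEq (j : ℕ) m).symm
        rw [h2] at h4
        rw [← Nat.add_mod]
        rw [Nat.ModEq] at h4
        rw [h4, Nat.mod_self]
end

section
/- Let m be a positive divisor of s and let C be an F_q-subspace of M_n(F_{q^s}). Then every element of E_m(C), the F_{q^m}-span of { φ̄(A) : A ∈ C } inside M_{ns}(F_{q^m}), has rank divisible by s/m (rank taken over F_{q^m}). -/
open Polynomial Module DirectSum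

section PhiHom

variable {K L M : Type*} [Field K] [Field L] [Field M] [Algebra K L] [Algebra K M] {s n : ℕ}

/-- `phibar` followed by entrywise `algebraMap K M`, as a `K`-algebra hom. -/
noncomputable def PhiHom (b : Basis (Fin s) K L) :
    Matrix (Fin n) (Fin n) L →ₐ[K] Matrix (Fin n × Fin s) (Fin n × Fin s) M :=
  ((Algebra.ofId K M).mapMatrix).comp <|
    (Matrix.compAlgEquiv (Fin n) (Fin s) K K).toAlgHom.comp <|
      AlgHom.mapMatrix <|
        (LinearMap.toMatrixAlgEquiv b).toAlgHom.comp (Algebra.lmul K L)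

lemma PhiHom_apply (b : Basis (Fin s) K L) (A : Matrix (Fin n) (Fin n) L) :
    PhiHom (M := M) b A = (phibar b A).map (algebraMap K M) := by
  have hmul : ∀ α : L, LinearMap.mulLeft K α = Algebra.lmul K L α := fun α =>
    LinearMap.ext fun x => rfl
  ext ⟨i, u⟩ ⟨j, v⟩
  simp only [PhiHom, AlgHom.comp_apply, AlgHom.mapMatrix_apply, AlgEquiv.toAlgHom_eq_coe,
    AlgHom.coe_coe, Matrix.map_apply, phibar, phi, hmul, Algebra.ofId_apply]
  rfl

end PhiHom

universe u

lemma finrank_quot_span (M : Type u) [Field M] (g : M[X]) (hg : g ≠ 0) :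
    Module.finrank M (M[X] ⧸ (M[X] ∙ g)) = g.natDegree := by
  have h : (M[X] ∙ g) = (Ideal.span {g} : Ideal M[X]) := rfl
  rw [h]
  exact (AdjoinRoot.powerBasis hg).finrank

lemma fd_quot_span (M : Type u) [Field M] (g : M[X]) (hg : g ≠ 0) :
    FiniteDimensional M (M[X] ⧸ (M[X] ∙ g)) :=
  Module.Finite.of_basis (AdjoinRoot.powerBasis hg).basis

lemma lemA {M : Type u} [Field M] {W : Type u} [AddCommGroup W] [Module M W]
    [FiniteDimensional M W] (g : W →ₗ[M] W) (f : M[X]) (hf0 : f ≠ 0)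
    (hfg : Polynomial.aeval g f = 0) (hsq : Squarefree f) (d : ℕ)
    (hd : ∀ p : M[X], p ∣ f → Irreducible p → d ∣ p.natDegree) :
    d ∣ Module.finrank M W := by
  classical
  have hfkill : ∀ x : Module.AEval' g, f • x = 0 := by
    intro x
    have h1 := Module.AEval.of_aeval_smul (a := g) f ((Module.AEval.of M W g).symm x)
    simp only [LinearEquiv.apply_symm_apply] at h1
    rw [← h1, hfg]
    simp
  have htors : Module.IsTorsion M[X] (Module.AEval' g) := fun x =>
    ⟨⟨f, mem_nonZeroDivisors_of_ne_zero hf0⟩, hfkill x⟩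
  obtain ⟨ι, hι, p, hp, e, ⟨equ⟩⟩ := Module.equiv_directSum_of_isTorsion.{u,u} htors
  have hdvdf : ∀ i, p i ^ e i ∣ f := by
    intro i
    have h0 : f • (DirectSum.lof M[X] ι (fun i => M[X] ⧸ M[X] ∙ p i ^ e i) i
        (Submodule.Quotient.mk 1)) = 0 := by
      have h2 := congrArg equ (hfkill (equ.symm (DirectSum.lof M[X] ι
        (fun i => M[X] ⧸ M[X] ∙ p i ^ e i) i (Submodule.Quotient.mk 1))))
      rw [map_smul, LinearEquiv.apply_symm_apply, map_zero] at h2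
      exact h2
    have h1 := congrArg (DirectSum.component M[X] ι
      (fun i => M[X] ⧸ M[X] ∙ p i ^ e i) i) h0
    rw [map_smul, DirectSum.component.lof_self, map_zero] at h1
    have h3 : Submodule.Quotient.mk (p := M[X] ∙ p i ^ e i) (f * 1) = 0 := h1
    rw [Submodule.Quotient.mk_eq_zero, mul_one] at h3
    exact (Ideal.mem_span_singleton).mp h3
  have he : ∀ i, e i ≤ 1 := by
    intro i
    by_contra h
    push_neg at h
    have h2 : p i * p i ∣ f :=
      dvd_trans (by simpa [sq] using pow_dvd_pow (p i) h) (hdvdf i)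
    exact (hp i).not_isUnit (hsq _ h2)
  haveI : ∀ i, FiniteDimensional M (M[X] ⧸ M[X] ∙ p i ^ e i) := fun i =>
    fd_quot_span M _ (pow_ne_zero _ (hp i).ne_zero)
  have hfr : Module.finrank M W = ∑ i, Module.finrank M (M[X] ⧸ M[X] ∙ p i ^ e i) := by
    have e1 : W ≃ₗ[M] ⨁ i, (M[X] ⧸ M[X] ∙ p i ^ e i) :=
      (Module.AEval.of M W g).trans (equ.restrictScalars M)
    rw [e1.finrank_eq, Module.finrank_directSum]
  rw [hfr]
  apply Finset.dvd_sum
  intro i _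
  rw [finrank_quot_span M _ (pow_ne_zero _ (hp i).ne_zero), natDegree_pow]
  rcases Nat.le_one_iff_eq_zero_or_eq_one.mp (he i) with h | h <;> rw [h]
  · simp
  · have := hdvdf i
    rw [h, pow_one] at this
    simpa using hd (p i) this (hp i)

open IntermediateField in
lemma lemB {K M : Type*} [Field K] [Field M] [Algebra K M] [FiniteDimensional K M] {s m : ℕ}
    (hm : 0 < m) (hrk : Module.finrank K M = m) (hdvd : m ∣ s)
    (f : K[X]) (hmon : f.Monic) (hirr : Irreducible f) (hdeg : f.natDegree = s)
    (p : M[X]) (hpdvd : p ∣ f.map (algebraMap K M)) (hpirr : Irreducible p) :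
    (s / m) ∣ p.natDegree := by
  classical
  haveI : Fact (Irreducible p) := ⟨hpirr⟩
  haveI : FiniteDimensional M (AdjoinRoot p) :=
    Module.Finite.of_basis (AdjoinRoot.powerBasis hpirr.ne_zero).basis
  haveI : FiniteDimensional K (AdjoinRoot p) := FiniteDimensional.trans K M (AdjoinRoot p)
  have hME : Module.finrank M (AdjoinRoot p) = p.natDegree := by
    simpa using (AdjoinRoot.powerBasis hpirr.ne_zero).finrank
  have hKE : Module.finrank K (AdjoinRoot p) = m * p.natDegree := by
    rw [← hrk, ← hME]
    exact (Module.finrank_mul_finrank K M (AdjoinRoot p)).symm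
  set α := AdjoinRoot.root p with hα'
  have hroot : Polynomial.aeval α f = 0 := by
    obtain ⟨q, hq⟩ := hpdvd
    have h2 : Polynomial.aeval α (f.map (algebraMap K M)) = 0 := by
      rw [hq, map_mul]
      have : Polynomial.aeval α p = 0 := by
        rw [AdjoinRoot.aeval_eq, AdjoinRoot.mk_self]
      rw [this, zero_mul]
    rwa [Polynomial.aeval_map_algebraMap] at h2
  have hmin : minpoly K α = f := (minpoly.eq_of_irreducible_of_monic hirr hroot hmon).symm
  have hint : IsIntegral K α := ⟨f, hmon, by rwa [← Polynomial.aeval_def]⟩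
  have hs' : s ∣ Module.finrank K (AdjoinRoot p) := by
    have h1 : Module.finrank K K⟮α⟯ = s := by
      rw [IntermediateField.adjoin.finrank hint, hmin, hdeg]
    have h2 := Module.finrank_mul_finrank K K⟮α⟯ (AdjoinRoot p)
    rw [h1] at h2
    exact ⟨_, h2.symm⟩
  rw [hKE] at hs'
  have hsm : m * (s / m) = s := Nat.mul_div_cancel' hdvd
  rw [← hsm] at hs'
  exact (Nat.mul_dvd_mul_iff_left hm).mp hs'

/-- Let `m` be a positive divisor of `s` and `C` an `F_q`-subspace
of `Mₙ(F_{q^s})`.  Then every element of `E_m(C)`, the `F_{q^m}`-span of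
`{ φ̄(A) : A ∈ C }` inside `M_{ns}(F_{q^m})`, has rank divisible by `s/m`
(rank over `F_{q^m}`). -/
theorem rank_embSpace_dvd (q s n m : ℕ) (hq : IsPrimePow q) (hs : 1 ≤ s) (hn : 1 ≤ n)
    (hm : 1 ≤ m) (hdvd : m ∣ s) (K L M : Type*) [Field K] [Fintype K] [Field L]
    [Fintype L] [Field M] [Fintype M] [Algebra K L] [Algebra K M]
    (hKcard : Fintype.card K = q) (hLcard : Fintype.card L = q ^ s)
    (hMcard : Fintype.card M = q ^ m) (b : Module.Basis (Fin s) K L)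
    (C : Submodule K (Matrix (Fin n) (Fin n) L)) :
    ∀ N ∈ embSpace (M := M) b C, (s / m) ∣ N.rank := by
  classical
  intro N hN
  have hq2 : 2 ≤ q := hq.two_le
  have hrkM : Module.finrank K M = m := by
    have h1 : Fintype.card M = Fintype.card K ^ Module.finrank K M := card_eq_pow_finrank
    rw [hKcard, hMcard] at h1
    exact (Nat.pow_right_injective hq2 h1.symm)
  have hrkL : Module.finrank K L = s := by
    rw [Module.finrank_eq_card_basis b, Fintype.card_fin]
  obtain ⟨lam, hlam⟩ := Field.exists_primitive_element_of_finite_top K L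
  have hint : IsIntegral K lam := IsIntegral.of_finite K lam
  have hf_monic : (minpoly K lam).Monic := minpoly.monic hint
  have hf_irr : Irreducible (minpoly K lam) := minpoly.irreducible hint
  have hf_deg : (minpoly K lam).natDegree = s := by
    rw [← IntermediateField.adjoin.finrank hint, hlam, IntermediateField.finrank_top', hrkL]
  have hf_sep : (minpoly K lam).Separable := PerfectField.separable_of_irreducible hf_irr
  set f' : M[X] := (minpoly K lam).map (algebraMap K M) with hf'def
  have hf'0 : f' ≠ 0 := Polynomial.map_ne_zero (minpoly.ne_zero hint)
  have hf'sq : Squarefree f' := (hf_sep.map).squarefree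
  set Φ := (PhiHom (M := M) (n := n) b) with hΦ
  have hΦeq : ∀ A, Φ A = (phibar b A).map (algebraMap K M) := PhiHom_apply b
  have hspan : embSpace (M := M) b C = Submodule.span M (Φ '' C) := by
    unfold embSpace
    congr 1
  set D := Φ (algebraMap L (Matrix (Fin n) (Fin n) L) lam) with hD
  have hcomm : D * N = N * D := by
    rw [hspan] at hN
    induction hN using Submodule.span_induction with
    | mem x hx =>
      obtain ⟨A, hA, rfl⟩ := hx
      rw [hD, ← map_mul, ← map_mul, Algebra.commutes]
    | zero => simp
    | add x y hx hy ihx ihy => rw [mul_add, add_mul, ihx, ihy]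
    | smul c x hx ihx => rw [mul_smul_comm, smul_mul_assoc, ihx]
  have hDf : Polynomial.aeval D f' = 0 := by
    rw [hf'def, Polynomial.aeval_map_algebraMap, hD, Polynomial.aeval_algHom_apply]
    have h3 : Polynomial.aeval (algebraMap L (Matrix (Fin n) (Fin n) L) lam) (minpoly K lam)
        = algebraMap L (Matrix (Fin n) (Fin n) L) (Polynomial.aeval lam (minpoly K lam)) := by
      rw [← IsScalarTower.toAlgHom_apply K L (Matrix (Fin n) (Fin n) L) lam,
        Polynomial.aeval_algHom_apply, IsScalarTower.toAlgHom_apply]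
    rw [h3, minpoly.aeval, map_zero, map_zero]
  set Dl := D.mulVecLin with hDl
  have hinv : ∀ v ∈ LinearMap.range N.mulVecLin, Dl v ∈ LinearMap.range N.mulVecLin := by
    rintro v ⟨x, rfl⟩
    refine ⟨Dl x, ?_⟩
    have h1 := congrFun (congrArg DFunLike.coe (Matrix.mulVecLin_mul N D)) x
    have h2 := congrFun (congrArg DFunLike.coe (Matrix.mulVecLin_mul D N)) x
    simp only [LinearMap.coe_comp, Function.comp_apply] at h1 h2
    rw [← h1, ← hcomm, h2]
  set g := Dl.restrict hinv with hg
  have hkey : ∀ k : ℕ, ∀ x : LinearMap.range N.mulVecLin,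
      ((g ^ k) x : (Fin n × Fin s) → M) = (Dl ^ k) x.1 := by
    intro k
    induction k with
    | zero => intro x; simp
    | succ k ih =>
      intro x
      rw [pow_succ, Module.End.mul_apply, ih (g x), pow_succ, Module.End.mul_apply]
      rfl
  have hDlf : Polynomial.aeval Dl f' = 0 := by
    have h5 : ((Matrix.toLinAlgEquiv' (R := M) (n := Fin n × Fin s)) D : _) = Dl :=
      LinearMap.ext fun v => by rw [Matrix.toLinAlgEquiv'_apply, hDl, Matrix.mulVecLin_apply]
    have h4 := Polynomial.aeval_algHom_apply
      (Matrix.toLinAlgEquiv' (R := M) (n := Fin n × Fin s)) D f'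
    rw [hDf, map_zero] at h4
    rwa [h5] at h4
  have hgf : Polynomial.aeval g f' = 0 := by
    have hval : ∀ P : M[X], ∀ x : LinearMap.range N.mulVecLin,
        ((Polynomial.aeval g P) x : (Fin n × Fin s) → M) = (Polynomial.aeval Dl P) x.1 := by
      intro P
      induction P using Polynomial.induction_on' with
      | add p q hp hq =>
        intro x
        simp only [map_add, LinearMap.add_apply, Submodule.coe_add, hp, hq]
      | monomial k c =>
        intro x
        simp only [Polynomial.aeval_monomial, Module.End.mul_apply,
          Module.algebraMap_end_apply, SetLike.val_smul, hkey]
    exact LinearMap.ext fun x => Subtype.ext (by rw [hval, hDlf]; simp)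
  have hrank : N.rank = Module.finrank M (LinearMap.range N.mulVecLin) := rfl
  rw [hrank]
  exact lemA g f' hf'0 hgf hf'sq (s / m)
    (fun p hp hirr => lemB hm hrkM hdvd (minpoly K lam) hf_monic hf_irr hf_deg p hp hirr)
end
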